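/- arXiv:1406.7748 — 3 statements merged into one kernel-verified Lean document; each statement's English description precedes it below -/
import Mathlib

section
/- Let V be a Banach space, T > 0 and z₁,z₂ > 1. Let h ∈ 𝒞𝒞_{3,3}(V) be such that h = δg for some g ∈ 𝒞𝒞_{2,2}(V) and ‖h‖_{z₁,z₂} < ∞. Then there exists r ∈ 𝒞𝒞_{2,2}(V) with δr = h and ‖r‖_{z₁,z₂} ≤ (2^{z₁}−2)^{−1}(2^{z₂}−2)^{−1} ‖h‖_{z₁,z₂}; moreover r is unique, in the sense that any r′ ∈ 𝒞𝒞_{2,2}(V) with δr′ = h and ‖r′‖_{w₁,w₂} < ∞ for some w₁,w₂ > 1 equals r. (r = Λh, the two-dimensional sewing map.) -/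
open Set

section
variable {V : Type*} [NormedAddCommGroup V]

/-- `δ₁a` for `a ∈ 𝒞𝒞_{2,2}(V)`. -/
def del1 (a : ℝ → ℝ → ℝ → ℝ → V) (s₁ u s₂ t₁ t₂ : ℝ) : V :=
  a u s₂ t₁ t₂ - a s₁ s₂ t₁ t₂ + a s₁ u t₁ t₂

/-- `δa = δ₂δ₁a ∈ 𝒞𝒞_{3,3}(V)` for `a ∈ 𝒞𝒞_{2,2}(V)`. -/
def delFull (a : ℝ → ℝ → ℝ → ℝ → V) (s₁ u₁ s₂ t₁ u₂ t₂ : ℝ) : V :=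
  del1 a s₁ u₁ s₂ u₂ t₂ - del1 a s₁ u₁ s₂ t₁ t₂ + del1 a s₁ u₁ s₂ t₁ u₂

end


open Filter Topology

noncomputable section
namespace Sew2D

variable {V : Type*} [NormedAddCommGroup V] [NormedSpace ℝ V] [CompleteSpace V]

def pt (a b : ℝ) (k i : ℕ) : ℝ := a + i * (b - a) / k

def US (φ : ℝ → ℝ → V) (k : ℕ) (a b : ℝ) : V :=
  ∑ i ∈ Finset.range k, φ (pt a b k i) (pt a b k (i+1))

def LL (φ : ℝ → ℝ → V) (a b : ℝ) : V := limUnder atTop (fun n => US φ (2^n) a b)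

lemma pt_zero (a b : ℝ) (k : ℕ) : pt a b k 0 = a := by simp [pt]

lemma pt_last (a b : ℝ) {k : ℕ} (hk : k ≠ 0) : pt a b k k = b := by
  have : (k:ℝ) ≠ 0 := Nat.cast_ne_zero.2 hk
  rw [pt, mul_div_cancel_left₀ _ this]; ring

lemma pt_self (a : ℝ) (k i : ℕ) : pt a a k i = a := by simp [pt]

lemma US_one (φ : ℝ → ℝ → V) (a b : ℝ) : US φ 1 a b = φ a b := by
  have h1 : pt a b 1 1 = b := pt_last a b one_ne_zero
  simp [US, pt_zero, h1]

lemma US_self (φ : ℝ → ℝ → V) (hφ : φ a a = 0) (k : ℕ) : US φ k a a = 0 := by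
  simp [US, pt_self, hφ]

lemma pt_succ_sub (a b : ℝ) (k i : ℕ) :
    pt a b k (i+1) - pt a b k i = (b - a) / k := by
  simp only [pt]; push_cast; ring

lemma pt_affine (a b : ℝ) {k i : ℕ} (hik : i ≤ k) :
    ∃ t : ℝ, t ∈ Icc (0:ℝ) 1 ∧ pt a b k i = a + t * (b - a) := by
  rcases Nat.eq_zero_or_pos k with hk | hk
  · exact ⟨0, by norm_num, by simp [pt, hk]⟩
  · refine ⟨(i:ℝ)/(k:ℝ), ⟨by positivity, ?_⟩, by rw [pt]; ring⟩
    rw [div_le_one (by exact_mod_cast hk)]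
    exact_mod_cast hik

lemma affpt_mem {T a b : ℝ} (ha : a ∈ Icc 0 T) (hb : b ∈ Icc 0 T) {t : ℝ}
    (ht : t ∈ Icc (0:ℝ) 1) : a + t * (b - a) ∈ Icc 0 T := by
  obtain ⟨ha0, haT⟩ := ha; obtain ⟨hb0, hbT⟩ := hb; obtain ⟨ht0, ht1⟩ := ht
  constructor <;> nlinarith

lemma pt_mem {T a b : ℝ} (ha : a ∈ Icc 0 T) (hb : b ∈ Icc 0 T) {k i : ℕ} (hik : i ≤ k) :
    pt a b k i ∈ Icc 0 T := by
  obtain ⟨t, ht, hpt⟩ := pt_affine a b hik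
  rw [hpt]; exact affpt_mem ha hb ht

lemma affpt_mem_uIcc {a b t : ℝ} (ht : t ∈ Icc (0:ℝ) 1) : a + t * (b - a) ∈ uIcc a b := by
  obtain ⟨ht0, ht1⟩ := ht
  rcases le_total a b with hab | hab
  · rw [uIcc_of_le hab]; constructor <;> nlinarith
  · rw [uIcc_of_ge hab]; constructor <;> nlinarith

lemma pt_mem_uIcc {a b : ℝ} {k i : ℕ} (hik : i ≤ k) : pt a b k i ∈ uIcc a b := by
  obtain ⟨t, ht, hpt⟩ := pt_affine a b hik
  rw [hpt]; exact affpt_mem_uIcc ht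

lemma abs_sub_le_of_uIcc {a b x y : ℝ} (hx : x ∈ uIcc a b) (hy : y ∈ uIcc a b) :
    |y - x| ≤ |b - a| := by
  rw [uIcc, mem_Icc] at hx hy
  have h1 : min a b ≤ x := hx.1
  have h2 : x ≤ max a b := hx.2
  have h3 : min a b ≤ y := hy.1
  have h4 : y ≤ max a b := hy.2
  rcases le_total a b with hab | hab
  · rw [min_eq_left hab] at h1 h3
    rw [max_eq_right hab] at h2 h4
    rw [abs_of_nonneg (by linarith : (0:ℝ) ≤ b - a), abs_le]
    constructor <;> linarith
  · rw [min_eq_right hab] at h1 h3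
    rw [max_eq_left hab] at h2 h4
    rw [abs_of_nonpos (by linarith : b - a ≤ 0), abs_le]
    constructor <;> linarith

lemma uIcc_subset_Icc {T a b : ℝ} (ha : a ∈ Icc 0 T) (hb : b ∈ Icc 0 T) :
    uIcc a b ⊆ Icc 0 T := by
  intro x hx
  rw [uIcc, mem_Icc] at hx
  exact ⟨le_trans (le_min ha.1 hb.1) hx.1, le_trans hx.2 (max_le ha.2 hb.2)⟩

lemma US_concat (φ : ℝ → ℝ → V) (a b : ℝ) (p s : ℕ) (hp : p ≠ 0) (hs : s ≠ 0) :
    US φ (p+s) a b = US φ p a (pt a b (p+s) p) + US φ s (pt a b (p+s) p) b := by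
  have hn : ((p:ℝ) + s) ≠ 0 := by positivity
  have hp' : (p:ℝ) ≠ 0 := Nat.cast_ne_zero.2 hp
  have hs' : (s:ℝ) ≠ 0 := Nat.cast_ne_zero.2 hs
  set u := pt a b (p+s) p with hu
  have h1 : ∀ i : ℕ, pt a u p i = pt a b (p+s) i := by
    intro i; simp only [pt, hu]; push_cast; field_simp; ring
  have h2 : ∀ j : ℕ, pt u b s j = pt a b (p+s) (p+j) := by
    intro j; simp only [pt, hu]; push_cast; field_simp; ring
  rw [US, US, US, Finset.sum_range_add]
  congr 1
  · exact Finset.sum_congr rfl fun i _ => by rw [h1, h1]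
  · refine Finset.sum_congr rfl fun j _ => ?_
    rw [h2, h2, Nat.add_assoc]

lemma pt_mul (a b : ℝ) (m k i : ℕ) (hm : m ≠ 0) : pt a b (m*k) (m*i) = pt a b k i := by
  rcases Nat.eq_zero_or_pos k with rfl | hk
  · simp [pt]
  · have hm' : (m:ℝ) ≠ 0 := Nat.cast_ne_zero.2 hm
    have hk' : (k:ℝ) ≠ 0 := Nat.cast_ne_zero.2 hk.ne'
    simp only [pt]; push_cast; field_simp

lemma pt_left_nested (a b : ℝ) {n j : ℕ} (hn : n ≠ 0) (hj : j ≠ 0) (i : ℕ) :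
    pt a (pt a b n j) j i = pt a b n i := by
  have hn' : (n:ℝ) ≠ 0 := Nat.cast_ne_zero.2 hn
  have hj' : (j:ℝ) ≠ 0 := Nat.cast_ne_zero.2 hj
  simp only [pt]; field_simp; ring

lemma US_blocks (φ : ℝ → ℝ → V) (a : ℝ) (k q : ℕ) (hq : q ≠ 0) :
    ∀ b : ℝ, US φ (k*q) a b = ∑ i ∈ Finset.range k, US φ q (pt a b k i) (pt a b k (i+1)) := by
  induction k with
  | zero => simp [US]
  | succ m ih =>
    intro b
    rcases Nat.eq_zero_or_pos m with rfl | hm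
    · rw [Nat.one_mul, Finset.sum_range_one]
      have h0 : pt a b (0+1) 0 = a := pt_zero a b _
      have h1 : pt a b (0+1) (0+1) = b := pt_last a b one_ne_zero
      rw [h0, h1]
    · have hmq : m*q ≠ 0 := Nat.mul_ne_zero hm.ne' hq
      have hsplit : (m+1)*q = m*q + q := by ring
      have hw : pt a b (m*q+q) (m*q) = pt a b (m+1) m := by
        have e1 : m*q+q = q*(m+1) := by ring
        have e2 : m*q = q*m := by ring
        rw [e1, e2, pt_mul a b q (m+1) m hq]
      have hlast : pt a b (m+1) (m+1) = b := pt_last a b (Nat.succ_ne_zero m)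
      rw [hsplit, US_concat φ a b (m*q) q hmq hq, hw, Finset.sum_range_succ, hlast]
      congr 1
      rw [ih (pt a b (m+1) m)]
      refine Finset.sum_congr rfl fun i _ => ?_
      rw [pt_left_nested a b (Nat.succ_ne_zero m) hm.ne' i,
        pt_left_nested a b (Nat.succ_ne_zero m) hm.ne' (i+1)]

lemma chain_est (φ : ℝ → ℝ → V) {s : Set ℝ} {β : ℝ}
    (hb : ∀ x u y, x ∈ s → u ∈ s → y ∈ s → ‖φ x u + φ u y - φ x y‖ ≤ β)
    (hd : ∀ x ∈ s, φ x x = 0) :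
    ∀ (m : ℕ) (p : ℕ → ℝ), (∀ i, i ≤ m → p i ∈ s) →
      ‖(∑ i ∈ Finset.range m, φ (p i) (p (i+1))) - φ (p 0) (p m)‖ ≤ m * β := by
  intro m
  induction m with
  | zero =>
    intro p hp
    simp [hd _ (hp 0 le_rfl)]
  | succ m ih =>
    intro p hp
    have h1 := ih p (fun i hi => hp i (le_trans hi (Nat.le_succ m)))
    have h2 := hb (p 0) (p m) (p (m+1)) (hp 0 (Nat.zero_le _)) (hp m (Nat.le_succ m))
      (hp (m+1) le_rfl)
    rw [Finset.sum_range_succ]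
    have key : (∑ i ∈ Finset.range m, φ (p i) (p (i+1))) + φ (p m) (p (m+1)) - φ (p 0) (p (m+1))
        = ((∑ i ∈ Finset.range m, φ (p i) (p (i+1))) - φ (p 0) (p m))
          + (φ (p 0) (p m) + φ (p m) (p (m+1)) - φ (p 0) (p (m+1))) := by abel
    rw [key]
    calc ‖_ + _‖ ≤ _ := norm_add_le _ _
      _ ≤ m * β + β := add_le_add h1 h2
      _ = ((m+1 : ℕ) : ℝ) * β := by push_cast; ring

lemma pow_rpow_comm (n : ℕ) (e : ℝ) : ((2:ℝ)^n) ^ e = ((2:ℝ)^e)^n := by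
  rw [← Real.rpow_natCast 2 n, ← Real.rpow_natCast ((2:ℝ)^e) n,
    ← Real.rpow_mul (by norm_num), ← Real.rpow_mul (by norm_num), mul_comm]

section main

variable {T z κ : ℝ} {φ : ℝ → ℝ → V}

lemma block_est (hκ : 0 ≤ κ)
    (hbd : ∀ x u y D : ℝ, x ∈ Icc 0 T → u ∈ Icc 0 T → y ∈ Icc 0 T → 0 ≤ D →
      |u - x| ≤ D → |y - u| ≤ D → ‖φ x u + φ u y - φ x y‖ ≤ κ * D ^ z)
    (hdiag : ∀ x ∈ Icc 0 T, φ x x = 0)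
    {a b : ℝ} (ha : a ∈ Icc 0 T) (hb : b ∈ Icc 0 T) {q : ℕ} (hq : q ≠ 0) :
    ‖US φ q a b - φ a b‖ ≤ q * (κ * |b - a| ^ z) := by
  have hsub := uIcc_subset_Icc ha hb
  have h := chain_est φ (s := uIcc a b) (β := κ * |b - a| ^ z)
    (fun x u y hx hu hy => hbd x u y (|b - a|) (hsub hx) (hsub hu) (hsub hy) (abs_nonneg _)
      (abs_sub_le_of_uIcc hx hu) (abs_sub_le_of_uIcc hu hy))
    (fun x hx => hdiag x (hsub hx))
    q (pt a b q) (fun i hi => pt_mem_uIcc hi)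
  rwa [pt_zero, pt_last a b hq] at h

lemma double_est (hκ : 0 ≤ κ)
    (hbd : ∀ x u y D : ℝ, x ∈ Icc 0 T → u ∈ Icc 0 T → y ∈ Icc 0 T → 0 ≤ D →
      |u - x| ≤ D → |y - u| ≤ D → ‖φ x u + φ u y - φ x y‖ ≤ κ * D ^ z)
    {a b : ℝ} (ha : a ∈ Icc 0 T) (hb : b ∈ Icc 0 T) (K : ℕ) :
    ‖US φ (K*2) a b - US φ K a b‖ ≤ K * (κ * (|b - a| / (2*K)) ^ z) := by
  rcases Nat.eq_zero_or_pos K with rfl | hK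
  · simp [US]
  have hK' : (0:ℝ) < K := by exact_mod_cast hK
  rw [US_blocks φ a K 2 two_ne_zero b]
  rw [show US φ K a b = ∑ i ∈ Finset.range K, φ (pt a b K i) (pt a b K (i+1)) from rfl]
  rw [← Finset.sum_sub_distrib]
  refine le_trans (norm_sum_le _ _) ?_
  have hterm : ∀ i ∈ Finset.range K,
      ‖US φ 2 (pt a b K i) (pt a b K (i+1)) - φ (pt a b K i) (pt a b K (i+1))‖
        ≤ κ * (|b - a| / (2*K)) ^ z := by
    intro i hi
    rw [Finset.mem_range] at hi
    set x := pt a b K i with hx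
    set y := pt a b K (i+1) with hy
    have hxI : x ∈ Icc 0 T := pt_mem ha hb hi.le
    have hyI : y ∈ Icc 0 T := pt_mem ha hb hi
    set m := pt x y 2 1 with hm
    have hmI : m ∈ Icc 0 T := uIcc_subset_Icc hxI hyI (pt_mem_uIcc one_le_two)
    have hUS2 : US φ 2 x y = φ x m + φ m y := by
      rw [US, Finset.sum_range_succ, Finset.sum_range_one, pt_zero,
        pt_last x y two_ne_zero]
    have hyx : y - x = (b - a) / K := pt_succ_sub a b K i
    have hmx : m - x = (b - a) / (2*K) := by
      rw [hm, pt]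
      push_cast
      rw [hyx]; ring
    have hym : y - m = (b - a) / (2*K) := by
      have e : y - m = (y - x) - (m - x) := by ring
      rw [e, hyx, hmx]; ring
    have habs : |(b - a) / (2*K)| = |b - a| / (2*K) := by
      rw [abs_div, abs_of_pos (by positivity : (0:ℝ) < 2*(K:ℝ))]
    rw [hUS2]
    exact hbd x m y (|b - a| / (2*K)) hxI hmI hyI (by positivity)
      (by rw [hmx, habs]) (by rw [hym, habs])
  refine le_trans (Finset.sum_le_sum hterm) ?_
  rw [Finset.sum_const, Finset.card_range, nsmul_eq_mul]

end main

section main2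

variable {T z κ : ℝ} {φ : ℝ → ℝ → V}

lemma theta_lt_one (hz : 1 < z) : (2:ℝ)^(1-z) < 1 :=
  Real.rpow_lt_one_of_one_lt_of_neg one_lt_two (by linarith)

lemma theta_nonneg : (0:ℝ) ≤ (2:ℝ)^(1-z) := Real.rpow_nonneg (by norm_num) _

lemma two_rpow_gt_two (hz : 1 < z) : 2 < (2:ℝ)^z := by
  calc (2:ℝ) = (2:ℝ)^(1:ℝ) := (Real.rpow_one 2).symm
    _ < (2:ℝ)^z := Real.rpow_lt_rpow_of_exponent_lt one_lt_two hz

lemma key_dist (hz : 1 < z) (hκ : 0 ≤ κ)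
    (hbd : ∀ x u y D : ℝ, x ∈ Icc 0 T → u ∈ Icc 0 T → y ∈ Icc 0 T → 0 ≤ D →
      |u - x| ≤ D → |y - u| ≤ D → ‖φ x u + φ u y - φ x y‖ ≤ κ * D ^ z)
    {a b : ℝ} (ha : a ∈ Icc 0 T) (hb : b ∈ Icc 0 T) {q : ℕ} (hq : 1 ≤ q) (n : ℕ) :
    dist (US φ (2^n*q) a b) (US φ (2^(n+1)*q) a b)
      ≤ (κ * |b - a| ^ z * (2:ℝ)^(-z)) * ((2:ℝ)^(1-z))^n := by
  have e : 2^(n+1)*q = (2^n*q)*2 := by ring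
  rw [dist_eq_norm', e]
  refine le_trans (double_est hκ hbd ha hb (2^n*q)) ?_
  set k : ℕ := 2^n*q with hk
  have hkpos : 0 < k := Nat.mul_pos (pow_pos (by norm_num : (0:ℕ) < 2) n) hq
  have hkR : (0:ℝ) < (k:ℝ) := by exact_mod_cast hkpos
  have hE : (0:ℝ) ≤ |b - a| := abs_nonneg _
  have h2k : (0:ℝ) < 2*(k:ℝ) := by linarith
  -- rewrite the LHS
  have hdiv : (|b - a| / (2*(k:ℝ))) ^ z = |b - a| ^ z / ((2:ℝ)^z * (k:ℝ)^z) := by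
    rw [Real.div_rpow hE h2k.le, Real.mul_rpow (by norm_num) hkR.le]
  rw [hdiv]
  have h2z : (0:ℝ) < (2:ℝ)^z := Real.rpow_pos_of_pos two_pos z
  have hkz : (0:ℝ) < (k:ℝ)^z := Real.rpow_pos_of_pos hkR z
  have hk1z : (k:ℝ) / (k:ℝ)^z = (k:ℝ)^(1-z) := by
    rw [Real.rpow_sub hkR, Real.rpow_one]
  have step : (k:ℝ) * (κ * (|b - a| ^ z / ((2:ℝ)^z * (k:ℝ)^z)))
      = (κ * |b - a| ^ z * (2:ℝ)^(-z)) * (k:ℝ)^(1-z) := by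
    rw [← hk1z, Real.rpow_neg (by norm_num : (0:ℝ) ≤ 2)]
    field_simp
  rw [step]
  have hmono : ((k:ℝ))^(1-z) ≤ ((2^n:ℕ):ℝ)^(1-z) := by
    apply Real.rpow_le_rpow_of_nonpos (by positivity) ?_ (by linarith)
    exact_mod_cast Nat.le_mul_of_pos_right (2^n) hq
  have hpow : ((2^n:ℕ):ℝ)^(1-z) = ((2:ℝ)^(1-z))^n := by
    push_cast
    exact pow_rpow_comm n (1-z)
  have hC : 0 ≤ κ * |b - a| ^ z * (2:ℝ)^(-z) := by positivity
  calc (κ * |b - a| ^ z * (2:ℝ)^(-z)) * (k:ℝ)^(1-z)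
      ≤ (κ * |b - a| ^ z * (2:ℝ)^(-z)) * ((2^n:ℕ):ℝ)^(1-z) := by
        exact mul_le_mul_of_nonneg_left hmono hC
    _ = (κ * |b - a| ^ z * (2:ℝ)^(-z)) * ((2:ℝ)^(1-z))^n := by rw [hpow]

end main2

def HBD (T z κ : ℝ) (φ : ℝ → ℝ → V) : Prop :=
  ∀ x u y D : ℝ, x ∈ Icc 0 T → u ∈ Icc 0 T → y ∈ Icc 0 T → 0 ≤ D →
    |u - x| ≤ D → |y - u| ≤ D → ‖φ x u + φ u y - φ x y‖ ≤ κ * D ^ z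

section main3

variable {T z κ : ℝ} {φ : ℝ → ℝ → V}

lemma cauchy_US (hz : 1 < z) (hκ : 0 ≤ κ) (hbd : HBD T z κ φ)
    {a b : ℝ} (ha : a ∈ Icc 0 T) (hb : b ∈ Icc 0 T) {q : ℕ} (hq : 1 ≤ q) :
    CauchySeq (fun n => US φ (2^n*q) a b) :=
  cauchySeq_of_le_geometric _ _ (theta_lt_one hz) (fun n => key_dist hz hκ hbd ha hb hq n)

lemma tendsto_US (hz : 1 < z) (hκ : 0 ≤ κ) (hbd : HBD T z κ φ)
    {a b : ℝ} (ha : a ∈ Icc 0 T) (hb : b ∈ Icc 0 T) :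
    Tendsto (fun n => US φ (2^n) a b) atTop (𝓝 (LL φ a b)) := by
  have hc := cauchy_US hz hκ hbd ha hb (q := 1) le_rfl
  simp only [mul_one] at hc
  exact hc.tendsto_limUnder

lemma pow_cast_rpow (n : ℕ) (e : ℝ) : ((2^n : ℕ) : ℝ)^e = ((2:ℝ)^e)^n := by
  push_cast
  exact pow_rpow_comm n e

lemma diff_est (hz : 1 < z) (hκ : 0 ≤ κ) (hbd : HBD T z κ φ)
    (hdiag : ∀ x ∈ Icc 0 T, φ x x = 0)
    {a b : ℝ} (ha : a ∈ Icc 0 T) (hb : b ∈ Icc 0 T) {q : ℕ} (hq : q ≠ 0) (n : ℕ) :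
    ‖US φ (2^n*q) a b - US φ (2^n) a b‖
      ≤ ((q:ℝ) * (κ * |b - a| ^ z)) * ((2:ℝ)^(1-z))^n := by
  have h2n : (0:ℝ) < ((2^n:ℕ):ℝ) := by positivity
  rw [US_blocks φ a (2^n) q hq b]
  rw [show US φ (2^n) a b = ∑ i ∈ Finset.range (2^n),
    φ (pt a b (2^n) i) (pt a b (2^n) (i+1)) from rfl]
  rw [← Finset.sum_sub_distrib]
  refine le_trans (norm_sum_le _ _) ?_
  have hterm : ∀ i ∈ Finset.range (2^n),
      ‖US φ q (pt a b (2^n) i) (pt a b (2^n) (i+1)) - φ (pt a b (2^n) i) (pt a b (2^n) (i+1))‖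
        ≤ (q:ℝ) * (κ * (|b - a| ^ z * ((2^n:ℕ):ℝ)^(-z))) := by
    intro i hi
    rw [Finset.mem_range] at hi
    have hxI := pt_mem ha hb hi.le
    have hyI := pt_mem ha hb hi
    refine le_trans (block_est hκ hbd hdiag hxI hyI hq) ?_
    have hsub : pt a b (2^n) (i+1) - pt a b (2^n) i = (b-a)/((2^n:ℕ):ℝ) := pt_succ_sub a b _ i
    have habs : |pt a b (2^n) (i+1) - pt a b (2^n) i| = |b-a| / ((2^n:ℕ):ℝ) := by
      rw [hsub, abs_div, abs_of_pos h2n]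
    rw [habs, Real.div_rpow (abs_nonneg _) h2n.le, Real.rpow_neg h2n.le]
    rw [div_eq_mul_inv]
  refine le_trans (Finset.sum_le_sum hterm) ?_
  rw [Finset.sum_const, Finset.card_range, nsmul_eq_mul]
  have e : ((2^n : ℕ):ℝ) * ((q:ℝ) * (κ * (|b-a|^z * ((2^n:ℕ):ℝ)^(-z))))
      = ((q:ℝ)*(κ*|b-a|^z)) * (((2^n:ℕ):ℝ))^(1-z) := by
    rw [show (1-z : ℝ) = 1 + (-z) by ring, Real.rpow_add h2n, Real.rpow_one]
    ring
  rw [e, pow_cast_rpow n (1-z)]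

lemma tendsto_US_mul (hz : 1 < z) (hκ : 0 ≤ κ) (hbd : HBD T z κ φ)
    (hdiag : ∀ x ∈ Icc 0 T, φ x x = 0)
    {a b : ℝ} (ha : a ∈ Icc 0 T) (hb : b ∈ Icc 0 T) {q : ℕ} (hq : 1 ≤ q) :
    Tendsto (fun n => US φ (2^n*q) a b) atTop (𝓝 (LL φ a b)) := by
  have h0 : Tendsto (fun n => US φ (2^n*q) a b - US φ (2^n) a b) atTop (𝓝 0) := by
    apply squeeze_zero_norm (fun n => diff_est hz hκ hbd hdiag ha hb (Nat.one_le_iff_ne_zero.mp hq) n)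
    rw [show (0:ℝ) = ((q:ℝ) * (κ * |b - a| ^ z)) * 0 by ring]
    exact (tendsto_pow_atTop_nhds_zero_of_lt_one theta_nonneg (theta_lt_one hz)).const_mul _
  have h1 := tendsto_US hz hκ hbd ha hb
  have := h1.add h0
  rw [add_zero] at this
  convert this using 2 with n
  abel

lemma LL_rate (hz : 1 < z) (hκ : 0 ≤ κ) (hbd : HBD T z κ φ)
    {a b : ℝ} (ha : a ∈ Icc 0 T) (hb : b ∈ Icc 0 T) (n : ℕ) :
    ‖US φ (2^n) a b - LL φ a b‖
      ≤ ((2:ℝ)^z - 2)⁻¹ * κ * |b - a| ^ z * ((2:ℝ)^(1-z))^n := by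
  have hkey : ∀ m : ℕ, dist (US φ (2^m) a b) (US φ (2^(m+1)) a b)
      ≤ (κ * |b - a| ^ z * (2:ℝ)^(-z)) * ((2:ℝ)^(1-z))^m := by
    intro m
    have := key_dist hz hκ hbd ha hb (q := 1) le_rfl m
    simpa [mul_one] using this
  have hd := dist_le_of_le_geometric_of_tendsto ((2:ℝ)^(1-z)) (κ * |b - a| ^ z * (2:ℝ)^(-z))
    (theta_lt_one hz) hkey (tendsto_US hz hκ hbd ha hb) n
  rw [dist_eq_norm] at hd
  refine le_trans hd (le_of_eq ?_)
  have h2z : (2:ℝ) < (2:ℝ)^z := two_rpow_gt_two hz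
  have h2zpos : (0:ℝ) < (2:ℝ)^z := by linarith
  have e1 : (2:ℝ)^(1-z) = 2 / (2:ℝ)^z := by
    rw [Real.rpow_sub two_pos, Real.rpow_one]
  have e2 : (2:ℝ)^(-z) = 1 / (2:ℝ)^z := by
    rw [Real.rpow_neg (by norm_num : (0:ℝ) ≤ 2), one_div]
  rw [e1, e2]
  have hne : (2:ℝ)^z - 2 ≠ 0 := by linarith
  field_simp

lemma LL_bound (hz : 1 < z) (hκ : 0 ≤ κ) (hbd : HBD T z κ φ)
    {a b : ℝ} (ha : a ∈ Icc 0 T) (hb : b ∈ Icc 0 T) :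
    ‖φ a b - LL φ a b‖ ≤ ((2:ℝ)^z - 2)⁻¹ * κ * |b - a| ^ z := by
  have := LL_rate hz hκ hbd ha hb 0
  rw [pow_zero, pow_zero, mul_one, US_one] at this
  exact this

lemma LL_self (hdiag : ∀ x ∈ Icc 0 T, φ x x = 0) {a : ℝ} (ha : a ∈ Icc 0 T) :
    LL φ a a = 0 := by
  have e : (fun n : ℕ => US φ (2^n) a a) = fun _ => (0:V) :=
    funext fun n => US_self φ (hdiag a ha) _
  rw [LL, e]
  exact Filter.Tendsto.limUnder_eq tendsto_const_nhds

end main3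

section main4

variable {T z κ : ℝ} {φ : ℝ → ℝ → V}

lemma pt_rev (a b : ℝ) {k i : ℕ} (hk : k ≠ 0) (hik : i ≤ k) :
    pt b a k i = pt a b k (k - i) := by
  have hk' : (k:ℝ) ≠ 0 := Nat.cast_ne_zero.2 hk
  have hc : ((k - i : ℕ):ℝ) = (k:ℝ) - (i:ℝ) := by
    rw [Nat.cast_sub hik]
  simp only [pt, hc]
  field_simp
  ring

lemma US_rev (φ : ℝ → ℝ → V) (a b : ℝ) {k : ℕ} (hk : k ≠ 0) :
    US φ k b a = ∑ j ∈ Finset.range k, φ (pt a b k (j+1)) (pt a b k j) := by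
  rw [US]
  rw [← Finset.sum_range_reflect (fun j => φ (pt a b k (j+1)) (pt a b k j)) k]
  refine Finset.sum_congr rfl fun i hi => ?_
  rw [Finset.mem_range] at hi
  rw [pt_rev a b hk hi.le, pt_rev a b hk hi]
  have e1 : k - i = (k - 1 - i) + 1 := by omega
  have e2 : k - (i+1) = k - 1 - i := by omega
  rw [e1, e2]

lemma LL_antisymm (hz : 1 < z) (hκ : 0 ≤ κ) (hbd : HBD T z κ φ)
    (hdiag : ∀ x ∈ Icc 0 T, φ x x = 0)
    {a b : ℝ} (ha : a ∈ Icc 0 T) (hb : b ∈ Icc 0 T) :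
    LL φ a b + LL φ b a = 0 := by
  have hκE : (0:ℝ) ≤ κ * |b - a| ^ z := by positivity
  have hsum : ∀ n : ℕ, ‖US φ (2^n) a b + US φ (2^n) b a‖
      ≤ (κ * |b - a| ^ z) * ((2:ℝ)^(1-z))^n := by
    intro n
    have h2n : (2:ℕ)^n ≠ 0 := pow_pos (by norm_num : (0:ℕ) < 2) n |>.ne'
    have h2nR : (0:ℝ) < ((2^n:ℕ):ℝ) := by positivity
    rw [US_rev φ a b h2n, US, ← Finset.sum_add_distrib]
    refine le_trans (norm_sum_le _ _) ?_
    have hterm : ∀ i ∈ Finset.range (2^n),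
        ‖φ (pt a b (2^n) i) (pt a b (2^n) (i+1)) + φ (pt a b (2^n) (i+1)) (pt a b (2^n) i)‖
          ≤ κ * (|b - a| ^ z * ((2^n:ℕ):ℝ)^(-z)) := by
      intro i hi
      rw [Finset.mem_range] at hi
      set x := pt a b (2^n) i
      set y := pt a b (2^n) (i+1)
      have hxI : x ∈ Icc 0 T := pt_mem ha hb hi.le
      have hyI : y ∈ Icc 0 T := pt_mem ha hb hi
      have habs : |y - x| = |b - a| / ((2^n:ℕ):ℝ) := by
        rw [pt_succ_sub a b _ i, abs_div, abs_of_pos h2nR]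
      have habs' : |x - y| = |b - a| / ((2^n:ℕ):ℝ) := by
        rw [abs_sub_comm, habs]
      have hD : (0:ℝ) ≤ |b - a| / ((2^n:ℕ):ℝ) := by positivity
      have := hbd x y x (|b - a| / ((2^n:ℕ):ℝ)) hxI hyI hxI hD (le_of_eq habs) (le_of_eq habs')
      rw [hdiag x hxI, sub_zero] at this
      refine le_trans this (le_of_eq ?_)
      rw [Real.div_rpow (abs_nonneg _) h2nR.le, Real.rpow_neg h2nR.le, div_eq_mul_inv]
    refine le_trans (Finset.sum_le_sum hterm) ?_
    rw [Finset.sum_const, Finset.card_range, nsmul_eq_mul]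
    refine le_of_eq ?_
    have e : ((2^n : ℕ):ℝ) * (κ * (|b-a|^z * ((2^n:ℕ):ℝ)^(-z)))
        = (κ*|b-a|^z) * (((2^n:ℕ):ℝ))^(1-z) := by
      rw [show (1-z : ℝ) = 1 + (-z) by ring, Real.rpow_add h2nR, Real.rpow_one]
      ring
    rw [e, pow_cast_rpow n (1-z)]
  have h0 : Tendsto (fun n => US φ (2^n) a b + US φ (2^n) b a) atTop (𝓝 0) := by
    apply squeeze_zero_norm hsum
    rw [show (0:ℝ) = (κ * |b - a| ^ z) * 0 by ring]
    exact (tendsto_pow_atTop_nhds_zero_of_lt_one theta_nonneg (theta_lt_one hz)).const_mul _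
  have hbd' : HBD T z κ φ := hbd
  have h1 := (tendsto_US hz hκ hbd ha hb).add (tendsto_US hz hκ hbd hb ha)
  exact tendsto_nhds_unique h1 h0

lemma LL_concat (hz : 1 < z) (hκ : 0 ≤ κ) (hbd : HBD T z κ φ)
    (hdiag : ∀ x ∈ Icc 0 T, φ x x = 0)
    {a b : ℝ} (ha : a ∈ Icc 0 T) (hb : b ∈ Icc 0 T) (p s : ℕ) (hps : p + s ≠ 0) :
    LL φ a b = LL φ a (pt a b (p+s) p) + LL φ (pt a b (p+s) p) b := by
  have huI : pt a b (p+s) p ∈ Icc 0 T := pt_mem ha hb (Nat.le_add_right p s)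
  rcases Nat.eq_zero_or_pos p with rfl | hp
  · rw [pt_zero, LL_self hdiag ha, zero_add]
  rcases Nat.eq_zero_or_pos s with rfl | hs
  · rw [show p + 0 = p from rfl] at hps huI ⊢
    rw [pt_last a b hps, LL_self hdiag hb, add_zero]
  set u := pt a b (p+s) p with hu
  have key : ∀ n : ℕ, US φ (2^n*(p+s)) a b = US φ (2^n*p) a u + US φ (2^n*s) u b := by
    intro n
    have h2n : (2:ℕ)^n ≠ 0 := (pow_pos (by norm_num : (0:ℕ) < 2) n).ne'
    have e : 2^n*(p+s) = 2^n*p + 2^n*s := by ring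
    have hu' : pt a b (2^n*p + 2^n*s) (2^n*p) = u := by
      rw [show 2^n*p + 2^n*s = 2^n*(p+s) by ring, pt_mul a b (2^n) (p+s) p h2n]
    rw [e, US_concat φ a b (2^n*p) (2^n*s) (Nat.mul_ne_zero h2n hp.ne') (Nat.mul_ne_zero h2n hs.ne'), hu']
  have t1 : Tendsto (fun n => US φ (2^n*(p+s)) a b) atTop (𝓝 (LL φ a b)) :=
    tendsto_US_mul hz hκ hbd hdiag ha hb (Nat.one_le_iff_ne_zero.2 hps)
  have t2 : Tendsto (fun n => US φ (2^n*p) a u + US φ (2^n*s) u b) atTop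
      (𝓝 (LL φ a u + LL φ u b)) :=
    (tendsto_US_mul hz hκ hbd hdiag ha huI hp).add (tendsto_US_mul hz hκ hbd hdiag huI hb hs)
  refine tendsto_nhds_unique ?_ t2
  exact (funext key : (fun n => US φ (2^n*(p+s)) a b) = _) ▸ t1

end main4

section main5

variable {T z κ : ℝ} {φ : ℝ → ℝ → V}

lemma US_continuousOn (hT : 0 ≤ T)
    (hφc : ContinuousOn (fun pq : ℝ × ℝ => φ pq.1 pq.2) (Icc 0 T ×ˢ Icc 0 T))
    (k : ℕ) :
    ContinuousOn (fun pq : ℝ × ℝ => US φ k pq.1 pq.2) (Icc 0 T ×ˢ Icc 0 T) := by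
  apply continuousOn_finset_sum
  intro i hi
  rw [Finset.mem_range] at hi
  have hmap : MapsTo (fun pq : ℝ × ℝ => (pt pq.1 pq.2 k i, pt pq.1 pq.2 k (i+1)))
      (Icc 0 T ×ˢ Icc 0 T) (Icc 0 T ×ˢ Icc 0 T) := by
    intro pq hpq
    rw [mem_prod] at hpq ⊢
    exact ⟨pt_mem hpq.1 hpq.2 hi.le, pt_mem hpq.1 hpq.2 hi⟩
  have hcont : Continuous (fun pq : ℝ × ℝ => (pt pq.1 pq.2 k i, pt pq.1 pq.2 k (i+1))) := by
    unfold pt; fun_prop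
  exact hφc.comp hcont.continuousOn hmap

lemma abs_le_T {a b : ℝ} (ha : a ∈ Icc 0 T) (hb : b ∈ Icc 0 T) : |b - a| ≤ T := by
  rw [abs_le]
  constructor <;> [linarith [ha.2, hb.1]; linarith [ha.1, hb.2]]

lemma LL_continuousOn (hT : 0 ≤ T) (hz : 1 < z) (hκ : 0 ≤ κ) (hbd : HBD T z κ φ)
    (hφc : ContinuousOn (fun pq : ℝ × ℝ => φ pq.1 pq.2) (Icc 0 T ×ˢ Icc 0 T)) :
    ContinuousOn (fun pq : ℝ × ℝ => LL φ pq.1 pq.2) (Icc 0 T ×ˢ Icc 0 T) := by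
  have hunif : TendstoUniformlyOn (fun n (pq : ℝ × ℝ) => US φ (2^n) pq.1 pq.2)
      (fun pq => LL φ pq.1 pq.2) atTop (Icc 0 T ×ˢ Icc 0 T) := by
    rw [Metric.tendstoUniformlyOn_iff]
    intro ε hε
    set M := ((2:ℝ)^z - 2)⁻¹ * κ * T ^ z with hM
    have hM0 : 0 ≤ M := by
      have h2z := two_rpow_gt_two hz
      have h1 : (0:ℝ) ≤ ((2:ℝ)^z - 2)⁻¹ := inv_nonneg.2 (by linarith)
      have h2 : (0:ℝ) ≤ T ^ z := Real.rpow_nonneg hT z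
      exact mul_nonneg (mul_nonneg h1 hκ) h2
    have htend : Tendsto (fun n => M * ((2:ℝ)^(1-z))^n) atTop (𝓝 0) := by
      rw [show (0:ℝ) = M * 0 by ring]
      exact (tendsto_pow_atTop_nhds_zero_of_lt_one theta_nonneg (theta_lt_one hz)).const_mul _
    filter_upwards [htend.eventually (eventually_lt_nhds hε)] with n hn pq hpq
    rw [mem_prod] at hpq
    have hrate := LL_rate hz hκ hbd hpq.1 hpq.2 n
    rw [dist_comm, dist_eq_norm]
    refine lt_of_le_of_lt (le_trans hrate ?_) hn
    have habs : |pq.2 - pq.1| ^ z ≤ T ^ z :=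
      Real.rpow_le_rpow (abs_nonneg _) (abs_le_T hpq.1 hpq.2) (by linarith)
    have h1 : (0:ℝ) ≤ ((2:ℝ)^z - 2)⁻¹ := by
      have := two_rpow_gt_two hz
      exact inv_nonneg.2 (by linarith)
    have hθ : (0:ℝ) ≤ ((2:ℝ)^(1-z))^n := pow_nonneg theta_nonneg n
    calc ((2:ℝ)^z - 2)⁻¹ * κ * |pq.2 - pq.1| ^ z * ((2:ℝ)^(1-z))^n
        ≤ ((2:ℝ)^z - 2)⁻¹ * κ * T ^ z * ((2:ℝ)^(1-z))^n := by
          exact mul_le_mul_of_nonneg_right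
            (mul_le_mul_of_nonneg_left habs (mul_nonneg h1 hκ)) hθ
      _ = M * ((2:ℝ)^(1-z))^n := by rw [hM]
  exact hunif.continuousOn (Frequently.of_forall fun n => US_continuousOn hT hφc (2^n))

set_option maxHeartbeats 1000000 in
lemma LL_between (hT : 0 ≤ T) (hz : 1 < z) (hκ : 0 ≤ κ) (hbd : HBD T z κ φ)
    (hdiag : ∀ x ∈ Icc 0 T, φ x x = 0)
    (hφc : ContinuousOn (fun pq : ℝ × ℝ => φ pq.1 pq.2) (Icc 0 T ×ˢ Icc 0 T))
    {a b u : ℝ} (ha : a ∈ Icc 0 T) (hb : b ∈ Icc 0 T) (hu : u ∈ uIcc a b) :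
    LL φ a b = LL φ a u + LL φ u b := by
  rcases eq_or_ne a b with rfl | hab
  · rw [uIcc_self, mem_singleton_iff] at hu
    subst hu
    rw [LL_self hdiag ha, add_zero]
  have hba : b - a ≠ 0 := sub_ne_zero.2 (Ne.symm hab)
  have huI : u ∈ Icc 0 T := uIcc_subset_Icc ha hb hu
  set t : ℝ := (u - a)/(b - a) with ht
  have htb : t * (b - a) = u - a := div_mul_cancel₀ _ hba
  have htmem : t ∈ Icc (0:ℝ) 1 := by
    rw [mem_uIcc] at hu
    rcases hu with ⟨h1, h2⟩ | ⟨h1, h2⟩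
    · have hba' : 0 < b - a := by
        rcases lt_or_eq_of_le (le_trans h1 h2) with h | h
        · linarith
        · exact absurd h hab
      exact ⟨div_nonneg (by linarith) hba'.le, (div_le_one hba').2 (by linarith)⟩
    · have hba' : b - a < 0 := by
        rcases lt_or_eq_of_le (le_trans h1 h2) with h | h
        · linarith
        · exact absurd h.symm hab
      have e : t = (a - u)/(a - b) := by
        rw [ht, ← neg_sub a u, ← neg_sub a b, neg_div_neg_eq]
      rw [e]
      have hab' : 0 < a - b := by linarith
      exact ⟨div_nonneg (by linarith) hab'.le, (div_le_one hab').2 (by linarith)⟩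
  set F : ℝ → V := fun t => LL φ a (a + t*(b-a)) + LL φ (a + t*(b-a)) b with hF
  have hFc : ContinuousOn F (Icc 0 1) := by
    have hmap : MapsTo (fun t : ℝ => ((a : ℝ), a + t*(b-a))) (Icc 0 1) (Icc 0 T ×ˢ Icc 0 T) :=
      fun t htm => by rw [mem_prod]; exact ⟨ha, affpt_mem ha hb htm⟩
    have hmap2 : MapsTo (fun t : ℝ => (a + t*(b-a), b)) (Icc 0 1) (Icc 0 T ×ˢ Icc 0 T) :=
      fun t htm => by rw [mem_prod]; exact ⟨affpt_mem ha hb htm, hb⟩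
    have hL := LL_continuousOn hT hz hκ hbd hφc
    have e1 : Continuous (fun s : ℝ => ((a:ℝ), a + s*(b-a))) := by fun_prop
    have e2 : Continuous (fun s : ℝ => (a + s*(b-a), b)) := by fun_prop
    have c1' := hL.comp e1.continuousOn hmap
    have c2' := hL.comp e2.continuousOn hmap2
    have c1 : ContinuousOn (fun s : ℝ => LL φ a (a + s*(b-a))) (Icc 0 1) := by
      simpa [Function.comp_def] using c1'
    have c2 : ContinuousOn (fun s : ℝ => LL φ (a + s*(b-a)) b) (Icc 0 1) := by
      simpa [Function.comp_def] using c2'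
    exact c1.add c2
  have hFd : ∀ p s : ℕ, p + s ≠ 0 → F ((p:ℝ)/((p:ℝ)+(s:ℝ))) = LL φ a b := by
    intro p s hps
    have e : a + ((p:ℝ)/((p:ℝ)+(s:ℝ)))*(b-a) = pt a b (p+s) p := by
      rw [pt]; push_cast; ring
    rw [hF]
    simp only [e]
    exact (LL_concat hz hκ hbd hdiag ha hb p s hps).symm
  -- dyadic approximation of t
  set pn : ℕ → ℕ := fun n => (⌊t * 2^n⌋).toNat with hpn
  have hpn_le : ∀ n, pn n ≤ 2^n := by
    intro n
    have h2 : t * 2^n ≤ ((2^n : ℤ) : ℝ) := by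
      push_cast
      nlinarith [htmem.2, pow_pos (show (0:ℝ) < 2 by norm_num) n]
    have hmono : ⌊t * 2^n⌋ ≤ ⌊((2^n : ℤ) : ℝ)⌋ := Int.floor_le_floor h2
    rw [Int.floor_intCast] at hmono
    rw [hpn]
    simp only
    exact Int.toNat_le.2 (by exact_mod_cast hmono)
  have hcast : ∀ n, ((pn n : ℕ):ℝ) = (⌊t * 2^n⌋ : ℝ) := by
    intro n
    rw [hpn]
    have h0 : 0 ≤ t * 2^n := by
      have := htmem.1; positivity
    exact_mod_cast congrArg Int.cast (Int.toNat_of_nonneg (Int.floor_nonneg.2 h0))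
  set tn : ℕ → ℝ := fun n => ((pn n : ℕ):ℝ)/(2^n : ℝ) with htn
  have htnval : ∀ n, F (tn n) = LL φ a b := by
    intro n
    have h2p : 0 < 2^n := pow_pos (by norm_num : (0:ℕ) < 2) n
    have hps : pn n + (2^n - pn n) ≠ 0 := by
      have hle := hpn_le n
      have : pn n + (2^n - pn n) = 2^n := Nat.add_sub_cancel' hle
      rw [this]
      exact h2p.ne'
    have e : (((pn n):ℝ))/(((pn n):ℝ) + ((2^n - pn n : ℕ):ℝ)) = tn n := by
      rw [htn]
      congr 1
      have : ((pn n):ℝ) + ((2^n - pn n : ℕ):ℝ) = ((2^n : ℕ):ℝ) := by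
        rw [← Nat.cast_add, Nat.add_sub_cancel' (hpn_le n)]
      rw [this]
      push_cast
      ring
    have := hFd (pn n) (2^n - pn n) hps
    rwa [e] at this
  have htn_mem : ∀ n, tn n ∈ Icc (0:ℝ) 1 := by
    intro n
    constructor
    · rw [htn]; positivity
    · rw [htn, div_le_one (by positivity)]
      exact_mod_cast hpn_le n
  have htn_tend : Tendsto tn atTop (𝓝 t) := by
    rw [← tendsto_sub_nhds_zero_iff]
    apply squeeze_zero_norm (a := fun n => (1/2:ℝ)^n)
    · intro n
      have h2n : (0:ℝ) < 2^n := by positivity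
      have h1 : (⌊t * 2^n⌋ : ℝ) ≤ t * 2^n := Int.floor_le _
      have h2 : t * 2^n < (⌊t * 2^n⌋ : ℝ) + 1 := Int.lt_floor_add_one _
      have e : tn n - t = ((⌊t * 2^n⌋:ℝ) - t * 2^n) * ((2:ℝ)^n)⁻¹ := by
        simp only [htn]
        rw [hcast n]
        field_simp
      have hhalf : (1/2:ℝ)^n = ((2:ℝ)^n)⁻¹ := by
        rw [one_div, inv_pow]
      rw [Real.norm_eq_abs, abs_le, e, hhalf]
      have hinv : (0:ℝ) < ((2:ℝ)^n)⁻¹ := by positivity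
      constructor
      · nlinarith
      · nlinarith
    · exact tendsto_pow_atTop_nhds_zero_of_lt_one (by norm_num) (by norm_num)
  have htnw : Tendsto tn atTop (𝓝[Icc (0:ℝ) 1] t) :=
    tendsto_nhdsWithin_iff.2 ⟨htn_tend, Eventually.of_forall htn_mem⟩
  have hcomp := (hFc t htmem).tendsto.comp htnw
  have hconst : F ∘ tn = fun _ => LL φ a b := funext fun n => htnval n
  rw [hconst] at hcomp
  have hFt_eq : F t = LL φ a b := tendsto_nhds_unique hcomp tendsto_const_nhds
  have hau : a + t*(b-a) = u := by
    rw [htb]; ring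
  rw [← hFt_eq, hF]
  simp only [hau]

lemma LL_del (hT : 0 ≤ T) (hz : 1 < z) (hκ : 0 ≤ κ) (hbd : HBD T z κ φ)
    (hdiag : ∀ x ∈ Icc 0 T, φ x x = 0)
    (hφc : ContinuousOn (fun pq : ℝ × ℝ => φ pq.1 pq.2) (Icc 0 T ×ˢ Icc 0 T))
    {a u b : ℝ} (ha : a ∈ Icc 0 T) (hu : u ∈ Icc 0 T) (hb : b ∈ Icc 0 T) :
    LL φ u b - LL φ a b + LL φ a u = 0 := by
  have case1 : u ∈ uIcc a b → LL φ u b - LL φ a b + LL φ a u = 0 := by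
    intro hm
    rw [LL_between hT hz hκ hbd hdiag hφc ha hb hm]
    abel
  have case2 : b ∈ uIcc a u → LL φ u b - LL φ a b + LL φ a u = 0 := by
    intro hm
    have h1 : LL φ a u = LL φ a b + LL φ b u := LL_between hT hz hκ hbd hdiag hφc ha hu hm
    have h2 : LL φ u b + LL φ b u = 0 := LL_antisymm hz hκ hbd hdiag hu hb
    rw [h1, ← h2]
    abel
  have case3 : a ∈ uIcc u b → LL φ u b - LL φ a b + LL φ a u = 0 := by
    intro hm
    have h1 : LL φ u b = LL φ u a + LL φ a b := LL_between hT hz hκ hbd hdiag hφc hu hb hm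
    have h2 : LL φ a u + LL φ u a = 0 := LL_antisymm hz hκ hbd hdiag ha hu
    rw [h1, ← h2]
    abel
  rcases le_total a u with h1 | h1 <;> rcases le_total u b with h2 | h2 <;>
    rcases le_total a b with h3 | h3
  · exact case1 (mem_uIcc.2 (Or.inl ⟨h1, h2⟩))
  · exact case1 (mem_uIcc.2 (Or.inl ⟨h1, h2⟩))
  · exact case2 (mem_uIcc.2 (Or.inl ⟨h3, h2⟩))
  · exact case3 (mem_uIcc.2 (Or.inr ⟨h3, h1⟩))
  · exact case3 (mem_uIcc.2 (Or.inl ⟨h1, h3⟩))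
  · exact case2 (mem_uIcc.2 (Or.inr ⟨h2, h3⟩))
  · exact case1 (mem_uIcc.2 (Or.inr ⟨h2, h1⟩))
  · exact case1 (mem_uIcc.2 (Or.inr ⟨h2, h1⟩))

end main5

lemma rpow_mul_rpow_le {x y D γ z : ℝ} (hx : 0 ≤ x) (hy : 0 ≤ y) (hxD : x ≤ D) (hyD : y ≤ D)
    (hγ : 0 < γ) (hγz : γ < z) : x ^ γ * y ^ (z - γ) ≤ D ^ z := by
  have hD : 0 ≤ D := le_trans hx hxD
  rcases eq_or_lt_of_le hD with hD0 | hD0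
  · have hx0 : x = 0 := le_antisymm (hD0 ▸ hxD) hx
    rw [hx0, Real.zero_rpow hγ.ne', zero_mul, ← hD0, Real.zero_rpow (by linarith : z ≠ 0)]
  · calc x ^ γ * y ^ (z - γ)
        ≤ D ^ γ * D ^ (z - γ) := by
          apply mul_le_mul (Real.rpow_le_rpow hx hxD hγ.le)
            (Real.rpow_le_rpow hy hyD (by linarith)) (Real.rpow_nonneg hy _)
            (Real.rpow_nonneg hD0.le _)
      _ = D ^ z := by
        rw [← Real.rpow_add hD0, show γ + (z - γ) = z by ring]

lemma pt_abs (a b : ℝ) {k : ℕ} (hk : k ≠ 0) (i : ℕ) :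
    |pt a b k (i+1) - pt a b k i| = |b - a| / k := by
  have hkR : (0:ℝ) < (k:ℝ) := by exact_mod_cast Nat.pos_of_ne_zero hk
  rw [pt_succ_sub, abs_div, abs_of_pos hkR]

/-- `R = G − Λ₂G` where `G = δ₁g`. -/
def RR (g : ℝ → ℝ → ℝ → ℝ → V) (s₁ u s₂ t₁ t₂ : ℝ) : V :=
  del1 g s₁ u s₂ t₁ t₂ - LL (del1 g s₁ u s₂) t₁ t₂

/-- `Q(a,b) = R(0,a,b)`. -/
def QQ (g : ℝ → ℝ → ℝ → ℝ → V) (x y t₁ t₂ : ℝ) : V := RR g 0 x y t₁ t₂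

/-- the two-dimensional sewing remainder -/
def rr (g : ℝ → ℝ → ℝ → ℝ → V) (x y t₁ t₂ : ℝ) : V :=
  QQ g x y t₁ t₂ - LL (fun a b => QQ g a b t₁ t₂) x y

lemma add_split {T : ℝ} {A : ℝ → ℝ → V}
    (hadd : ∀ a u b : ℝ, a ∈ Icc 0 T → u ∈ Icc 0 T → b ∈ Icc 0 T → A a b = A a u + A u b)
    {a b : ℝ} (ha : a ∈ Icc 0 T) (hb : b ∈ Icc 0 T) {k : ℕ} (hk : k ≠ 0) :
    A a b = ∑ i ∈ Finset.range k, A (pt a b k i) (pt a b k (i+1)) := by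
  have key : ∀ j, j ≤ k → A a (pt a b k j) = ∑ i ∈ Finset.range j, A (pt a b k i) (pt a b k (i+1)) := by
    intro j
    induction j with
    | zero =>
      intro _
      rw [Finset.sum_range_zero, pt_zero]
      have h := hadd a a a ha ha ha
      exact (left_eq_add.mp h)
    | succ m ih =>
      intro hm
      rw [Finset.sum_range_succ, ← ih (le_trans (Nat.le_succ m) hm)]
      exact hadd a (pt a b k m) (pt a b k (m+1)) ha
        (pt_mem ha hb (le_trans (Nat.le_succ m) hm)) (pt_mem ha hb hm)
  have := key k le_rfl
  rwa [pt_last a b hk] at this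

lemma geom_split {c x w : ℝ} (hw : 1 < w) (n : ℕ) :
    ((2^n:ℕ):ℝ) * (c * (|x| / ((2^n:ℕ):ℝ))^w) = (c * |x|^w) * ((2:ℝ)^(1-w))^n := by
  have h2n : (0:ℝ) < ((2^n:ℕ):ℝ) := by positivity
  rw [Real.div_rpow (abs_nonneg _) h2n.le, ← pow_cast_rpow n (1-w),
    show (1-w : ℝ) = 1 + (-w) by ring, Real.rpow_add h2n, Real.rpow_one, Real.rpow_neg h2n.le]
  field_simp

lemma additive_vanish {T : ℝ} (hT0 : 0 ≤ T) {A : ℝ → ℝ → V} {c₁ c₂ w₁' w₂' : ℝ}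
    (hc₁ : 0 ≤ c₁) (hc₂ : 0 ≤ c₂) (hw₁ : 1 < w₁') (hw₂ : 1 < w₂')
    (hadd : ∀ x v y : ℝ, x ∈ Icc 0 T → v ∈ Icc 0 T → y ∈ Icc 0 T → A x y = A x v + A v y)
    (hbd : ∀ x y : ℝ, x ∈ Icc 0 T → y ∈ Icc 0 T →
      ‖A x y‖ ≤ c₁ * |y - x| ^ w₁' + c₂ * |y - x| ^ w₂')
    {a b : ℝ} (ha : a ∈ Icc 0 T) (hb : b ∈ Icc 0 T) : A a b = 0 := by
  have hsplit : ∀ n : ℕ, ‖A a b‖ ≤ (c₁ * |b - a| ^ w₁') * ((2:ℝ)^(1-w₁'))^n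
      + (c₂ * |b - a| ^ w₂') * ((2:ℝ)^(1-w₂'))^n := by
    intro n
    have h2n : (2:ℕ)^n ≠ 0 := (pow_pos (by norm_num : (0:ℕ) < 2) n).ne'
    rw [add_split hadd ha hb h2n]
    refine le_trans (norm_sum_le _ _) ?_
    have hterm : ∀ i ∈ Finset.range (2^n),
        ‖A (pt a b (2^n) i) (pt a b (2^n) (i+1))‖
          ≤ c₁ * (|b - a| / ((2^n:ℕ):ℝ))^w₁' + c₂ * (|b - a| / ((2^n:ℕ):ℝ))^w₂' := by
      intro i hi
      rw [Finset.mem_range] at hi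
      have := hbd (pt a b (2^n) i) (pt a b (2^n) (i+1)) (pt_mem ha hb hi.le) (pt_mem ha hb hi)
      rwa [pt_abs a b h2n i] at this
    refine le_trans (Finset.sum_le_sum hterm) ?_
    rw [Finset.sum_const, Finset.card_range, nsmul_eq_mul, mul_add, geom_split hw₁, geom_split hw₂]
  have htend : Tendsto (fun n : ℕ => (c₁ * |b - a| ^ w₁') * ((2:ℝ)^(1-w₁'))^n
      + (c₂ * |b - a| ^ w₂') * ((2:ℝ)^(1-w₂'))^n) atTop (𝓝 0) := by
    rw [show (0:ℝ) = (c₁ * |b - a| ^ w₁') * 0 + (c₂ * |b - a| ^ w₂') * 0 by ring]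
    exact (((tendsto_pow_atTop_nhds_zero_of_lt_one theta_nonneg (theta_lt_one hw₁)).const_mul _).add
      ((tendsto_pow_atTop_nhds_zero_of_lt_one theta_nonneg (theta_lt_one hw₂)).const_mul _))
  have hle : ‖A a b‖ ≤ 0 := ge_of_tendsto htend (Eventually.of_forall hsplit)
  exact norm_le_zero_iff.mp hle

section mastersec

lemma master {V : Type*} [NormedAddCommGroup V] [NormedSpace ℝ V] [CompleteSpace V]
    {T z₁ z₂ : ℝ} (hT : 0 < T) (hz₁ : 1 < z₁) (hz₂ : 1 < z₂)
    (g : ℝ → ℝ → ℝ → ℝ → V)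
    (hgc : ContinuousOn (fun q : (ℝ × ℝ) × ℝ × ℝ => g q.1.1 q.1.2 q.2.1 q.2.2)
      ((Icc 0 T ×ˢ Icc 0 T) ×ˢ (Icc 0 T ×ˢ Icc 0 T)))
    (hg0 : ∀ s₁ s₂ t₁ t₂ : ℝ, s₁ ∈ Icc 0 T → s₂ ∈ Icc 0 T → t₁ ∈ Icc 0 T →
      t₂ ∈ Icc 0 T → (s₁ = s₂ ∨ t₁ = t₂) → g s₁ s₂ t₁ t₂ = 0)
    (N : ℕ) (C γ₁ γ₂ : Fin N → ℝ)
    (hC : ∀ k, 0 ≤ C k) (hγ₁ : ∀ k, γ₁ k ∈ Ioo (0:ℝ) z₁) (hγ₂ : ∀ k, γ₂ k ∈ Ioo (0:ℝ) z₂)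
    (hbound : ∀ s₁ u₁ s₂ t₁ u₂ t₂ : ℝ, s₁ ∈ Icc 0 T → u₁ ∈ Icc 0 T → s₂ ∈ Icc 0 T →
      t₁ ∈ Icc 0 T → u₂ ∈ Icc 0 T → t₂ ∈ Icc 0 T →
      ‖delFull g s₁ u₁ s₂ t₁ u₂ t₂‖ ≤ ∑ k, C k * |u₁ - s₁| ^ (γ₁ k) * |s₂ - u₁| ^ (z₁ - γ₁ k)
        * |u₂ - t₁| ^ (γ₂ k) * |t₂ - u₂| ^ (z₂ - γ₂ k)) :
    (ContinuousOn (fun q : (ℝ × ℝ) × ℝ × ℝ => rr g q.1.1 q.1.2 q.2.1 q.2.2)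
      ((Icc 0 T ×ˢ Icc 0 T) ×ˢ (Icc 0 T ×ˢ Icc 0 T))) ∧
    (∀ s₁ u₁ s₂ t₁ u₂ t₂ : ℝ, s₁ ∈ Icc 0 T → u₁ ∈ Icc 0 T → s₂ ∈ Icc 0 T →
      t₁ ∈ Icc 0 T → u₂ ∈ Icc 0 T → t₂ ∈ Icc 0 T →
      delFull (rr g) s₁ u₁ s₂ t₁ u₂ t₂ = delFull g s₁ u₁ s₂ t₁ u₂ t₂) ∧
    (∀ s₁ s₂ t₁ t₂ : ℝ, s₁ ∈ Icc 0 T → s₂ ∈ Icc 0 T → t₁ ∈ Icc 0 T → t₂ ∈ Icc 0 T →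
      ‖rr g s₁ s₂ t₁ t₂‖ ≤ ((2:ℝ)^z₁ - 2)⁻¹ * ((2:ℝ)^z₂ - 2)⁻¹ * (∑ k, C k)
        * |s₂ - s₁| ^ z₁ * |t₂ - t₁| ^ z₂) := by
  have hT0 : (0:ℝ) ≤ T := hT.le
  have h0I : (0:ℝ) ∈ Icc (0:ℝ) T := ⟨le_rfl, hT0⟩
  set κ₀ : ℝ := ∑ k, C k with hκ₀def
  have hκ₀ : 0 ≤ κ₀ := Finset.sum_nonneg (fun k _ => hC k)
  set κs : ℝ → ℝ → ℝ → ℝ :=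
    fun x u y => ∑ k, C k * |u - x| ^ (γ₁ k) * |y - u| ^ (z₁ - γ₁ k) with hκsdef
  have hκs0 : ∀ x u y, 0 ≤ κs x u y := fun x u y =>
    Finset.sum_nonneg (fun k _ => mul_nonneg (mul_nonneg (hC k)
      (Real.rpow_nonneg (abs_nonneg _) _)) (Real.rpow_nonneg (abs_nonneg _) _))
  have hκsD : ∀ x u y D : ℝ, 0 ≤ D → |u - x| ≤ D → |y - u| ≤ D → κs x u y ≤ κ₀ * D ^ z₁ := by
    intro x u y D hD h1 h2
    rw [hκsdef, hκ₀def]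
    simp only
    rw [Finset.sum_mul]
    apply Finset.sum_le_sum
    intro k _
    have hq := rpow_mul_rpow_le (abs_nonneg (u-x)) (abs_nonneg (y-u)) h1 h2 (hγ₁ k).1 (hγ₁ k).2
    calc C k * |u-x|^(γ₁ k) * |y-u|^(z₁ - γ₁ k)
        = C k * (|u-x|^(γ₁ k) * |y-u|^(z₁-γ₁ k)) := by ring
      _ ≤ C k * D^z₁ := mul_le_mul_of_nonneg_left hq (hC k)
  have hinv₁ : (0:ℝ) ≤ ((2:ℝ)^z₁-2)⁻¹ :=
    inv_nonneg.2 (by have := two_rpow_gt_two hz₁; linarith)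
  have hinv₂ : (0:ℝ) ≤ ((2:ℝ)^z₂-2)⁻¹ :=
    inv_nonneg.2 (by have := two_rpow_gt_two hz₂; linarith)
  -- t-direction HBD
  have hbd_t : ∀ s₁ u s₂ : ℝ, s₁ ∈ Icc 0 T → u ∈ Icc 0 T → s₂ ∈ Icc 0 T →
      HBD T z₂ (κs s₁ u s₂) (del1 g s₁ u s₂) := by
    intro s₁ u s₂ hs₁ hu hs₂ x u' y D hx hu' hy hD h1 h2
    have e : del1 g s₁ u s₂ x u' + del1 g s₁ u s₂ u' y - del1 g s₁ u s₂ x y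
        = delFull g s₁ u s₂ x u' y := by
      rw [delFull]; abel
    rw [e]
    refine le_trans (hbound s₁ u s₂ x u' y hs₁ hu hs₂ hx hu' hy) ?_
    rw [hκsdef]
    simp only
    rw [Finset.sum_mul]
    apply Finset.sum_le_sum
    intro k _
    have hq := rpow_mul_rpow_le (abs_nonneg (u'-x)) (abs_nonneg (y-u')) h1 h2 (hγ₂ k).1 (hγ₂ k).2
    have hnn : 0 ≤ C k * |u-s₁|^(γ₁ k) * |s₂-u|^(z₁-γ₁ k) :=
      mul_nonneg (mul_nonneg (hC k) (Real.rpow_nonneg (abs_nonneg _) _))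
        (Real.rpow_nonneg (abs_nonneg _) _)
    calc C k * |u-s₁|^(γ₁ k) * |s₂-u|^(z₁-γ₁ k) * |u'-x|^(γ₂ k) * |y-u'|^(z₂-γ₂ k)
        = (C k * |u-s₁|^(γ₁ k) * |s₂-u|^(z₁-γ₁ k)) * (|u'-x|^(γ₂ k) * |y-u'|^(z₂-γ₂ k)) := by
          ring
      _ ≤ (C k * |u-s₁|^(γ₁ k) * |s₂-u|^(z₁-γ₁ k)) * D^z₂ := mul_le_mul_of_nonneg_left hq hnn
  have hdiag_t : ∀ s₁ u s₂ : ℝ, s₁ ∈ Icc 0 T → u ∈ Icc 0 T → s₂ ∈ Icc 0 T →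
      ∀ x ∈ Icc 0 T, del1 g s₁ u s₂ x x = 0 := by
    intro s₁ u s₂ hs₁ hu hs₂ x hx
    rw [del1, hg0 u s₂ x x hu hs₂ hx hx (Or.inr rfl), hg0 s₁ s₂ x x hs₁ hs₂ hx hx (Or.inr rfl),
      hg0 s₁ u x x hs₁ hu hx hx (Or.inr rfl)]
    simp
  have hcont_t : ∀ s₁ u s₂ : ℝ, s₁ ∈ Icc 0 T → u ∈ Icc 0 T → s₂ ∈ Icc 0 T →
      ContinuousOn (fun pq : ℝ × ℝ => del1 g s₁ u s₂ pq.1 pq.2) (Icc 0 T ×ˢ Icc 0 T) := by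
    intro s₁ u s₂ hs₁ hu hs₂
    have hc : ∀ x y : ℝ, x ∈ Icc 0 T → y ∈ Icc 0 T →
        ContinuousOn (fun pq : ℝ × ℝ => g x y pq.1 pq.2) (Icc 0 T ×ˢ Icc 0 T) := by
      intro x y hx hy
      have hmap : MapsTo (fun pq : ℝ × ℝ => ((x, y), pq)) (Icc 0 T ×ˢ Icc 0 T)
          ((Icc 0 T ×ˢ Icc 0 T) ×ˢ (Icc 0 T ×ˢ Icc 0 T)) := by
        intro pq hpq
        rw [mem_prod]
        exact ⟨by rw [mem_prod]; exact ⟨hx, hy⟩, hpq⟩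
      have := hgc.comp (Continuous.continuousOn (by fun_prop)) hmap
      simpa [Function.comp_def] using this
    simp only [del1]
    exact ((hc u s₂ hu hs₂).sub (hc s₁ s₂ hs₁ hs₂)).add (hc s₁ u hs₁ hu)
  -- R facts
  have hRbd : ∀ x u y : ℝ, x ∈ Icc 0 T → u ∈ Icc 0 T → y ∈ Icc 0 T →
      ∀ τ τ' : ℝ, τ ∈ Icc 0 T → τ' ∈ Icc 0 T →
      ‖RR g x u y τ τ'‖ ≤ ((2:ℝ)^z₂-2)⁻¹ * κs x u y * |τ' - τ|^z₂ :=
    fun x u y hx hu hy τ τ' hτ hτ' =>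
      LL_bound hz₂ (hκs0 x u y) (hbd_t x u y hx hu hy) hτ hτ'
  have hRid : ∀ s₁ u s₂ : ℝ, s₁ ∈ Icc 0 T → u ∈ Icc 0 T → s₂ ∈ Icc 0 T →
      ∀ τ τ' : ℝ, τ ∈ Icc 0 T → τ' ∈ Icc 0 T →
      RR g s₁ u s₂ τ τ' = RR g 0 u s₂ τ τ' - RR g 0 s₁ s₂ τ τ' + RR g 0 s₁ u τ τ' := by
    intro s₁ u s₂ hs₁ hu hs₂ τ τ' hτ hτ'
    have hGid : ∀ t t' : ℝ, del1 g s₁ u s₂ t t'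
        = del1 g 0 u s₂ t t' - del1 g 0 s₁ s₂ t t' + del1 g 0 s₁ u t t' := by
      intro t t'; simp only [del1]; abel
    have hUSid : ∀ n : ℕ, US (del1 g s₁ u s₂) (2^n) τ τ'
        = US (del1 g 0 u s₂) (2^n) τ τ' - US (del1 g 0 s₁ s₂) (2^n) τ τ'
          + US (del1 g 0 s₁ u) (2^n) τ τ' := by
      intro n
      simp only [US, hGid, Finset.sum_add_distrib, Finset.sum_sub_distrib]
    have t1 := tendsto_US hz₂ (hκs0 0 u s₂) (hbd_t 0 u s₂ h0I hu hs₂) hτ hτ'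
    have t2 := tendsto_US hz₂ (hκs0 0 s₁ s₂) (hbd_t 0 s₁ s₂ h0I hs₁ hs₂) hτ hτ'
    have t3 := tendsto_US hz₂ (hκs0 0 s₁ u) (hbd_t 0 s₁ u h0I hs₁ hu) hτ hτ'
    have tcomb : Tendsto (fun n => US (del1 g s₁ u s₂) (2^n) τ τ') atTop
        (𝓝 (LL (del1 g 0 u s₂) τ τ' - LL (del1 g 0 s₁ s₂) τ τ' + LL (del1 g 0 s₁ u) τ τ')) :=
      ((t1.sub t2).add t3).congr (fun n => (hUSid n).symm)
    have hLLid : LL (del1 g s₁ u s₂) τ τ'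
        = LL (del1 g 0 u s₂) τ τ' - LL (del1 g 0 s₁ s₂) τ τ' + LL (del1 g 0 s₁ u) τ τ' := by
      rw [LL]
      exact tcomb.limUnder_eq
    rw [RR, RR, RR, RR, hGid τ τ', hLLid]
    abel
  have hRdiag : ∀ x ∈ Icc 0 T, ∀ τ τ' : ℝ, τ ∈ Icc 0 T → τ' ∈ Icc 0 T →
      RR g 0 x x τ τ' = 0 := by
    intro x hx τ τ' hτ hτ'
    have hb := hRbd 0 x x h0I hx hx τ τ' hτ hτ'
    have hzero : κs 0 x x = 0 := by
      rw [hκsdef]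
      simp only
      apply Finset.sum_eq_zero
      intro k _
      rw [sub_self, abs_zero, Real.zero_rpow (by have := (hγ₁ k).2; intro hc; linarith [sub_eq_zero.mp hc] : z₁ - γ₁ k ≠ 0)]
      ring
    rw [hzero, mul_zero, zero_mul] at hb
    exact norm_le_zero_iff.mp hb
  -- s-direction HBD for Q
  have hbd_s : ∀ τ τ' : ℝ, τ ∈ Icc 0 T → τ' ∈ Icc 0 T →
      HBD T z₁ (((2:ℝ)^z₂-2)⁻¹ * κ₀ * |τ' - τ|^z₂) (fun x y => QQ g x y τ τ') := by
    intro τ τ' hτ hτ' x u y D hx hu hy hD h1 h2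
    have e : QQ g x u τ τ' + QQ g u y τ τ' - QQ g x y τ τ' = RR g x u y τ τ' := by
      rw [hRid x u y hx hu hy τ τ' hτ hτ', QQ, QQ, QQ]
      abel
    rw [e]
    refine le_trans (hRbd x u y hx hu hy τ τ' hτ hτ') ?_
    have hκd := hκsD x u y D hD h1 h2
    have h2z : (0:ℝ) ≤ |τ'-τ|^z₂ := Real.rpow_nonneg (abs_nonneg _) _
    calc ((2:ℝ)^z₂-2)⁻¹ * κs x u y * |τ'-τ|^z₂
        ≤ ((2:ℝ)^z₂-2)⁻¹ * (κ₀ * D^z₁) * |τ'-τ|^z₂ := by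
          exact mul_le_mul_of_nonneg_right (mul_le_mul_of_nonneg_left hκd hinv₂) h2z
      _ = (((2:ℝ)^z₂-2)⁻¹ * κ₀ * |τ'-τ|^z₂) * D^z₁ := by ring
  have hdiag_s : ∀ τ τ' : ℝ, τ ∈ Icc 0 T → τ' ∈ Icc 0 T →
      ∀ x ∈ Icc 0 T, QQ g x x τ τ' = 0 := by
    intro τ τ' hτ hτ' x hx
    rw [QQ]
    exact hRdiag x hx τ τ' hτ hτ'
  have hκ₂0 : ∀ τ τ' : ℝ, 0 ≤ ((2:ℝ)^z₂-2)⁻¹ * κ₀ * |τ' - τ|^z₂ := fun τ τ' =>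
    mul_nonneg (mul_nonneg hinv₂ hκ₀) (Real.rpow_nonneg (abs_nonneg _) _)
  -- joint continuity
  have hGcont4 : ContinuousOn (fun q : (ℝ×ℝ)×ℝ×ℝ => del1 g 0 q.1.1 q.1.2 q.2.1 q.2.2)
      ((Icc 0 T ×ˢ Icc 0 T) ×ˢ (Icc 0 T ×ˢ Icc 0 T)) := by
    simp only [del1]
    have c2 : ContinuousOn (fun q : (ℝ×ℝ)×ℝ×ℝ => g 0 q.1.2 q.2.1 q.2.2)
        ((Icc 0 T ×ˢ Icc 0 T) ×ˢ (Icc 0 T ×ˢ Icc 0 T)) := by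
      have hmap : MapsTo (fun q : (ℝ×ℝ)×ℝ×ℝ => (((0:ℝ), q.1.2), q.2))
          ((Icc 0 T ×ˢ Icc 0 T) ×ˢ (Icc 0 T ×ˢ Icc 0 T))
          ((Icc 0 T ×ˢ Icc 0 T) ×ˢ (Icc 0 T ×ˢ Icc 0 T)) :=
        fun q hq => ⟨⟨h0I, hq.1.2⟩, hq.2⟩
      have := hgc.comp (Continuous.continuousOn (by fun_prop)) hmap
      simpa [Function.comp_def] using this
    have c3 : ContinuousOn (fun q : (ℝ×ℝ)×ℝ×ℝ => g 0 q.1.1 q.2.1 q.2.2)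
        ((Icc 0 T ×ˢ Icc 0 T) ×ˢ (Icc 0 T ×ˢ Icc 0 T)) := by
      have hmap : MapsTo (fun q : (ℝ×ℝ)×ℝ×ℝ => (((0:ℝ), q.1.1), q.2))
          ((Icc 0 T ×ˢ Icc 0 T) ×ˢ (Icc 0 T ×ˢ Icc 0 T))
          ((Icc 0 T ×ˢ Icc 0 T) ×ˢ (Icc 0 T ×ˢ Icc 0 T)) :=
        fun q hq => ⟨⟨h0I, hq.1.1⟩, hq.2⟩
      have := hgc.comp (Continuous.continuousOn (by fun_prop)) hmap
      simpa [Function.comp_def] using this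
    exact (hgc.sub c2).add c3
  have FnGcont : ∀ (K : ℕ), ContinuousOn (fun q : (ℝ×ℝ)×ℝ×ℝ =>
      US (del1 g 0 q.1.1 q.1.2) K q.2.1 q.2.2)
      ((Icc 0 T ×ˢ Icc 0 T) ×ˢ (Icc 0 T ×ˢ Icc 0 T)) := by
    intro K
    simp only [US]
    apply continuousOn_finset_sum
    intro i hi
    rw [Finset.mem_range] at hi
    have hmap : MapsTo (fun q : (ℝ×ℝ)×ℝ×ℝ =>
        ((q.1.1, q.1.2), (pt q.2.1 q.2.2 K i, pt q.2.1 q.2.2 K (i+1))))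
        ((Icc 0 T ×ˢ Icc 0 T) ×ˢ (Icc 0 T ×ˢ Icc 0 T))
        ((Icc 0 T ×ˢ Icc 0 T) ×ˢ (Icc 0 T ×ˢ Icc 0 T)) :=
      fun q hq => ⟨⟨hq.1.1, hq.1.2⟩, pt_mem hq.2.1 hq.2.2 hi.le, pt_mem hq.2.1 hq.2.2 hi⟩
    have := hGcont4.comp (Continuous.continuousOn (by unfold pt; fun_prop)) hmap
    simpa [Function.comp_def] using this
  have hLL2cont : ContinuousOn (fun q : (ℝ×ℝ)×ℝ×ℝ => LL (del1 g 0 q.1.1 q.1.2) q.2.1 q.2.2)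
      ((Icc 0 T ×ˢ Icc 0 T) ×ˢ (Icc 0 T ×ˢ Icc 0 T)) := by
    apply TendstoUniformlyOn.continuousOn
      (F := fun (n:ℕ) (q : (ℝ×ℝ)×ℝ×ℝ) => US (del1 g 0 q.1.1 q.1.2) (2^n) q.2.1 q.2.2)
      (p := atTop)
    · rw [Metric.tendstoUniformlyOn_iff]
      intro ε hε
      set M := ((2:ℝ)^z₂-2)⁻¹ * (κ₀ * T^z₁) * T^z₂ with hM
      have hM0 : 0 ≤ M :=
        mul_nonneg (mul_nonneg hinv₂ (mul_nonneg hκ₀ (Real.rpow_nonneg hT0 _)))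
          (Real.rpow_nonneg hT0 _)
      have htend : Tendsto (fun n : ℕ => M * ((2:ℝ)^(1-z₂))^n) atTop (𝓝 0) := by
        rw [show (0:ℝ) = M * 0 by ring]
        exact (tendsto_pow_atTop_nhds_zero_of_lt_one theta_nonneg (theta_lt_one hz₂)).const_mul _
      filter_upwards [htend.eventually (eventually_lt_nhds hε)] with n hn q hq
      have h11 := hq.1.1
      have h12 := hq.1.2
      have h21 := hq.2.1
      have h22 := hq.2.2
      rw [dist_comm, dist_eq_norm]
      have hrate := LL_rate hz₂ (hκs0 0 q.1.1 q.1.2) (hbd_t 0 q.1.1 q.1.2 h0I h11 h12) h21 h22 n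
      refine lt_of_le_of_lt (le_trans hrate ?_) hn
      have hκsb : κs 0 q.1.1 q.1.2 ≤ κ₀ * T^z₁ :=
        hκsD 0 q.1.1 q.1.2 T hT0 (abs_le_T h0I h11) (abs_le_T h11 h12)
      have habs : |q.2.2 - q.2.1|^z₂ ≤ T^z₂ :=
        Real.rpow_le_rpow (abs_nonneg _) (abs_le_T h21 h22) (by linarith)
      have hθ : (0:ℝ) ≤ ((2:ℝ)^(1-z₂))^n := pow_nonneg theta_nonneg n
      refine mul_le_mul_of_nonneg_right ?_ hθ
      refine mul_le_mul (mul_le_mul_of_nonneg_left hκsb hinv₂) habs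
        (Real.rpow_nonneg (abs_nonneg _) _) (mul_nonneg hinv₂ (mul_nonneg hκ₀ (Real.rpow_nonneg hT0 _)))
    · exact Frequently.of_forall fun n => FnGcont (2^n)
  have hQcont4 : ContinuousOn (fun q : (ℝ×ℝ)×ℝ×ℝ => QQ g q.1.1 q.1.2 q.2.1 q.2.2)
      ((Icc 0 T ×ˢ Icc 0 T) ×ˢ (Icc 0 T ×ˢ Icc 0 T)) := by
    simp only [QQ, RR]
    exact hGcont4.sub hLL2cont
  have FnQcont : ∀ K : ℕ, ContinuousOn (fun q : (ℝ×ℝ)×ℝ×ℝ =>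
      US (fun a b => QQ g a b q.2.1 q.2.2) K q.1.1 q.1.2)
      ((Icc 0 T ×ˢ Icc 0 T) ×ˢ (Icc 0 T ×ˢ Icc 0 T)) := by
    intro K
    simp only [US]
    apply continuousOn_finset_sum
    intro i hi
    rw [Finset.mem_range] at hi
    have hmap : MapsTo (fun q : (ℝ×ℝ)×ℝ×ℝ =>
        ((pt q.1.1 q.1.2 K i, pt q.1.1 q.1.2 K (i+1)), q.2))
        ((Icc 0 T ×ˢ Icc 0 T) ×ˢ (Icc 0 T ×ˢ Icc 0 T))
        ((Icc 0 T ×ˢ Icc 0 T) ×ˢ (Icc 0 T ×ˢ Icc 0 T)) :=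
      fun q hq => ⟨⟨pt_mem hq.1.1 hq.1.2 hi.le, pt_mem hq.1.1 hq.1.2 hi⟩, hq.2⟩
    have := hQcont4.comp (Continuous.continuousOn (by unfold pt; fun_prop)) hmap
    simpa [Function.comp_def] using this
  have hLL1cont : ContinuousOn (fun q : (ℝ×ℝ)×ℝ×ℝ =>
      LL (fun a b => QQ g a b q.2.1 q.2.2) q.1.1 q.1.2)
      ((Icc 0 T ×ˢ Icc 0 T) ×ˢ (Icc 0 T ×ˢ Icc 0 T)) := by
    apply TendstoUniformlyOn.continuousOn
      (F := fun (n:ℕ) (q : (ℝ×ℝ)×ℝ×ℝ) => US (fun a b => QQ g a b q.2.1 q.2.2) (2^n) q.1.1 q.1.2)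
      (p := atTop)
    · rw [Metric.tendstoUniformlyOn_iff]
      intro ε hε
      set M := ((2:ℝ)^z₁-2)⁻¹ * (((2:ℝ)^z₂-2)⁻¹ * κ₀ * T^z₂) * T^z₁ with hM
      have hM0 : 0 ≤ M :=
        mul_nonneg (mul_nonneg hinv₁ (mul_nonneg (mul_nonneg hinv₂ hκ₀)
          (Real.rpow_nonneg hT0 _))) (Real.rpow_nonneg hT0 _)
      have htend : Tendsto (fun n : ℕ => M * ((2:ℝ)^(1-z₁))^n) atTop (𝓝 0) := by
        rw [show (0:ℝ) = M * 0 by ring]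
        exact (tendsto_pow_atTop_nhds_zero_of_lt_one theta_nonneg (theta_lt_one hz₁)).const_mul _
      filter_upwards [htend.eventually (eventually_lt_nhds hε)] with n hn q hq
      have h11 := hq.1.1
      have h12 := hq.1.2
      have h21 := hq.2.1
      have h22 := hq.2.2
      rw [dist_comm, dist_eq_norm]
      have hrate := LL_rate hz₁ (hκ₂0 q.2.1 q.2.2) (hbd_s q.2.1 q.2.2 h21 h22) h11 h12 n
      refine lt_of_le_of_lt (le_trans hrate ?_) hn
      have hκ₂b : ((2:ℝ)^z₂-2)⁻¹ * κ₀ * |q.2.2 - q.2.1|^z₂ ≤ ((2:ℝ)^z₂-2)⁻¹ * κ₀ * T^z₂ :=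
        mul_le_mul_of_nonneg_left
          (Real.rpow_le_rpow (abs_nonneg _) (abs_le_T h21 h22) (by linarith))
          (mul_nonneg hinv₂ hκ₀)
      have habs : |q.1.2 - q.1.1|^z₁ ≤ T^z₁ :=
        Real.rpow_le_rpow (abs_nonneg _) (abs_le_T h11 h12) (by linarith)
      have hθ : (0:ℝ) ≤ ((2:ℝ)^(1-z₁))^n := pow_nonneg theta_nonneg n
      refine mul_le_mul_of_nonneg_right ?_ hθ
      refine mul_le_mul (mul_le_mul_of_nonneg_left hκ₂b hinv₁) habs
        (Real.rpow_nonneg (abs_nonneg _) _)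
        (mul_nonneg hinv₁ (mul_nonneg (mul_nonneg hinv₂ hκ₀) (Real.rpow_nonneg hT0 _)))
    · exact Frequently.of_forall fun n => FnQcont (2^n)
  have hrrcont : ContinuousOn (fun q : (ℝ×ℝ)×ℝ×ℝ => rr g q.1.1 q.1.2 q.2.1 q.2.2)
      ((Icc 0 T ×ˢ Icc 0 T) ×ˢ (Icc 0 T ×ˢ Icc 0 T)) := by
    simp only [rr]
    exact hQcont4.sub hLL1cont
  -- δr = δg
  have hφ₂cont : ∀ τ τ' : ℝ, τ ∈ Icc 0 T → τ' ∈ Icc 0 T →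
      ContinuousOn (fun pq : ℝ×ℝ => QQ g pq.1 pq.2 τ τ') (Icc 0 T ×ˢ Icc 0 T) := by
    intro τ τ' hτ hτ'
    have hmap : MapsTo (fun pq : ℝ×ℝ => (pq, (τ, τ'))) (Icc 0 T ×ˢ Icc 0 T)
        ((Icc 0 T ×ˢ Icc 0 T) ×ˢ (Icc 0 T ×ˢ Icc 0 T)) :=
      fun pq hpq => ⟨hpq, hτ, hτ'⟩
    have := hQcont4.comp (Continuous.continuousOn (by fun_prop)) hmap
    simpa [Function.comp_def] using this
  have hdel1rr : ∀ s₁ u₁ s₂ : ℝ, s₁ ∈ Icc 0 T → u₁ ∈ Icc 0 T → s₂ ∈ Icc 0 T →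
      ∀ τ τ' : ℝ, τ ∈ Icc 0 T → τ' ∈ Icc 0 T →
      del1 (rr g) s₁ u₁ s₂ τ τ' = RR g s₁ u₁ s₂ τ τ' := by
    intro s₁ u₁ s₂ hs₁ hu₁ hs₂ τ τ' hτ hτ'
    have hdel := LL_del hT0 hz₁ (hκ₂0 τ τ') (hbd_s τ τ' hτ hτ') (hdiag_s τ τ' hτ hτ')
      (hφ₂cont τ τ' hτ hτ') hs₁ hu₁ hs₂
    have hQ : QQ g u₁ s₂ τ τ' - QQ g s₁ s₂ τ τ' + QQ g s₁ u₁ τ τ' = RR g s₁ u₁ s₂ τ τ' := by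
      rw [hRid s₁ u₁ s₂ hs₁ hu₁ hs₂ τ τ' hτ hτ', QQ, QQ, QQ]
    rw [del1]
    simp only [rr]
    calc (QQ g u₁ s₂ τ τ' - LL (fun a b => QQ g a b τ τ') u₁ s₂)
          - (QQ g s₁ s₂ τ τ' - LL (fun a b => QQ g a b τ τ') s₁ s₂)
          + (QQ g s₁ u₁ τ τ' - LL (fun a b => QQ g a b τ τ') s₁ u₁)
        = (QQ g u₁ s₂ τ τ' - QQ g s₁ s₂ τ τ' + QQ g s₁ u₁ τ τ')
          - (LL (fun a b => QQ g a b τ τ') u₁ s₂ - LL (fun a b => QQ g a b τ τ') s₁ s₂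
            + LL (fun a b => QQ g a b τ τ') s₁ u₁) := by abel
      _ = RR g s₁ u₁ s₂ τ τ' := by rw [hdel, hQ, sub_zero]
  have hM2 : ∀ s₁ u₁ s₂ t₁ u₂ t₂ : ℝ, s₁ ∈ Icc 0 T → u₁ ∈ Icc 0 T → s₂ ∈ Icc 0 T →
      t₁ ∈ Icc 0 T → u₂ ∈ Icc 0 T → t₂ ∈ Icc 0 T →
      delFull (rr g) s₁ u₁ s₂ t₁ u₂ t₂ = delFull g s₁ u₁ s₂ t₁ u₂ t₂ := by
    intro s₁ u₁ s₂ t₁ u₂ t₂ hs₁ hu₁ hs₂ ht₁ hu₂ ht₂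
    have hdelt := LL_del hT0 hz₂ (hκs0 s₁ u₁ s₂) (hbd_t s₁ u₁ s₂ hs₁ hu₁ hs₂)
      (hdiag_t s₁ u₁ s₂ hs₁ hu₁ hs₂) (hcont_t s₁ u₁ s₂ hs₁ hu₁ hs₂) ht₁ hu₂ ht₂
    rw [delFull, hdel1rr s₁ u₁ s₂ hs₁ hu₁ hs₂ u₂ t₂ hu₂ ht₂,
      hdel1rr s₁ u₁ s₂ hs₁ hu₁ hs₂ t₁ t₂ ht₁ ht₂, hdel1rr s₁ u₁ s₂ hs₁ hu₁ hs₂ t₁ u₂ ht₁ hu₂,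
      delFull]
    simp only [RR]
    calc (del1 g s₁ u₁ s₂ u₂ t₂ - LL (del1 g s₁ u₁ s₂) u₂ t₂)
          - (del1 g s₁ u₁ s₂ t₁ t₂ - LL (del1 g s₁ u₁ s₂) t₁ t₂)
          + (del1 g s₁ u₁ s₂ t₁ u₂ - LL (del1 g s₁ u₁ s₂) t₁ u₂)
        = (del1 g s₁ u₁ s₂ u₂ t₂ - del1 g s₁ u₁ s₂ t₁ t₂ + del1 g s₁ u₁ s₂ t₁ u₂)
          - (LL (del1 g s₁ u₁ s₂) u₂ t₂ - LL (del1 g s₁ u₁ s₂) t₁ t₂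
            + LL (del1 g s₁ u₁ s₂) t₁ u₂) := by abel
      _ = del1 g s₁ u₁ s₂ u₂ t₂ - del1 g s₁ u₁ s₂ t₁ t₂ + del1 g s₁ u₁ s₂ t₁ u₂ := by
          rw [hdelt, sub_zero]
  refine ⟨hrrcont, hM2, ?_⟩
  intro s₁ s₂ t₁ t₂ hs₁ hs₂ ht₁ ht₂
  have hb := LL_bound hz₁ (hκ₂0 t₁ t₂) (hbd_s t₁ t₂ ht₁ ht₂) hs₁ hs₂
  refine le_trans (le_of_eq ?_) (le_trans hb (le_of_eq ?_))
  · rw [rr]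
  · ring

end mastersec

end Sew2D
end

open Sew2D

/-- **Two-dimensional sewing map `Λ`.**
Let `z₁, z₂ > 1` and let `h ∈ 𝒞𝒞_{3,3}(V)` be the coboundary of some `g ∈ 𝒞𝒞_{2,2}(V)`
with `‖h‖_{z₁,z₂} < ∞`.  Then there is an `r ∈ 𝒞𝒞_{2,2}(V)` with `δr = h` and
`‖r‖_{z₁,z₂} ≤ (2^{z₁}−2)⁻¹(2^{z₂}−2)⁻¹ ‖h‖_{z₁,z₂}` (the bound holding for every
decomposition of `h`), and `r` is unique among solutions with some finite
`(w₁,w₂)`-norm, `w₁, w₂ > 1`. -/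
theorem stmt4
    {V : Type*} [NormedAddCommGroup V] [NormedSpace ℝ V] [CompleteSpace V]
    (T : ℝ) (hT : 0 < T) (z₁ z₂ : ℝ) (hz₁ : 1 < z₁) (hz₂ : 1 < z₂)
    (h : ℝ → ℝ → ℝ → ℝ → ℝ → ℝ → V)
    -- h ∈ 𝒞𝒞_{3,3}(V)
    (hhc : ContinuousOn
      (fun q : (ℝ × ℝ × ℝ) × ℝ × ℝ × ℝ =>
        h q.1.1 q.1.2.1 q.1.2.2 q.2.1 q.2.2.1 q.2.2.2)
      ((Icc 0 T ×ˢ Icc 0 T ×ˢ Icc 0 T) ×ˢ (Icc 0 T ×ˢ Icc 0 T ×ˢ Icc 0 T)))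
    (hh0 : ∀ s₁ u₁ s₂ t₁ u₂ t₂ : ℝ, s₁ ∈ Icc 0 T → u₁ ∈ Icc 0 T → s₂ ∈ Icc 0 T →
      t₁ ∈ Icc 0 T → u₂ ∈ Icc 0 T → t₂ ∈ Icc 0 T →
      (s₁ = u₁ ∨ u₁ = s₂ ∨ t₁ = u₂ ∨ u₂ = t₂) → h s₁ u₁ s₂ t₁ u₂ t₂ = 0)
    -- h = δg for some g ∈ 𝒞𝒞_{2,2}(V)
    (hexact : ∃ g : ℝ → ℝ → ℝ → ℝ → V,
      (ContinuousOn (fun q : (ℝ × ℝ) × ℝ × ℝ => g q.1.1 q.1.2 q.2.1 q.2.2)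
        ((Icc 0 T ×ˢ Icc 0 T) ×ˢ (Icc 0 T ×ˢ Icc 0 T)) ∧
        ∀ s₁ s₂ t₁ t₂ : ℝ, s₁ ∈ Icc 0 T → s₂ ∈ Icc 0 T → t₁ ∈ Icc 0 T →
          t₂ ∈ Icc 0 T → (s₁ = s₂ ∨ t₁ = t₂) → g s₁ s₂ t₁ t₂ = 0) ∧
      ∀ s₁ u₁ s₂ t₁ u₂ t₂ : ℝ, s₁ ∈ Icc 0 T → u₁ ∈ Icc 0 T → s₂ ∈ Icc 0 T →
        t₁ ∈ Icc 0 T → u₂ ∈ Icc 0 T → t₂ ∈ Icc 0 T →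
        h s₁ u₁ s₂ t₁ u₂ t₂ = delFull g s₁ u₁ s₂ t₁ u₂ t₂)
    -- ‖h‖_{z₁,z₂} < ∞
    (hfin : ∃ (N : ℕ) (hd : Fin N → ℝ → ℝ → ℝ → ℝ → ℝ → ℝ → V) (C γ₁ γ₂ : Fin N → ℝ),
      (∀ k, 0 ≤ C k) ∧ (∀ k, γ₁ k ∈ Set.Ioo (0:ℝ) z₁) ∧ (∀ k, γ₂ k ∈ Set.Ioo (0:ℝ) z₂) ∧
      (∀ s₁ u₁ s₂ t₁ u₂ t₂ : ℝ, s₁ ∈ Icc 0 T → u₁ ∈ Icc 0 T → s₂ ∈ Icc 0 T →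
        t₁ ∈ Icc 0 T → u₂ ∈ Icc 0 T → t₂ ∈ Icc 0 T →
        h s₁ u₁ s₂ t₁ u₂ t₂ = ∑ k, hd k s₁ u₁ s₂ t₁ u₂ t₂) ∧
      (∀ k, ∀ s₁ u₁ s₂ t₁ u₂ t₂ : ℝ, s₁ ∈ Icc 0 T → u₁ ∈ Icc 0 T → s₂ ∈ Icc 0 T →
        t₁ ∈ Icc 0 T → u₂ ∈ Icc 0 T → t₂ ∈ Icc 0 T →
        ‖hd k s₁ u₁ s₂ t₁ u₂ t₂‖ ≤ C k * |u₁ - s₁| ^ (γ₁ k) * |s₂ - u₁| ^ (z₁ - γ₁ k)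
          * |u₂ - t₁| ^ (γ₂ k) * |t₂ - u₂| ^ (z₂ - γ₂ k))) :
    ∃ r : ℝ → ℝ → ℝ → ℝ → V,
      -- r ∈ 𝒞𝒞_{2,2}(V)
      (ContinuousOn (fun q : (ℝ × ℝ) × ℝ × ℝ => r q.1.1 q.1.2 q.2.1 q.2.2)
        ((Icc 0 T ×ˢ Icc 0 T) ×ˢ (Icc 0 T ×ˢ Icc 0 T)) ∧
        ∀ s₁ s₂ t₁ t₂ : ℝ, s₁ ∈ Icc 0 T → s₂ ∈ Icc 0 T → t₁ ∈ Icc 0 T →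
          t₂ ∈ Icc 0 T → (s₁ = s₂ ∨ t₁ = t₂) → r s₁ s₂ t₁ t₂ = 0) ∧
      -- δr = h
      (∀ s₁ u₁ s₂ t₁ u₂ t₂ : ℝ, s₁ ∈ Icc 0 T → u₁ ∈ Icc 0 T → s₂ ∈ Icc 0 T →
        t₁ ∈ Icc 0 T → u₂ ∈ Icc 0 T → t₂ ∈ Icc 0 T →
        delFull r s₁ u₁ s₂ t₁ u₂ t₂ = h s₁ u₁ s₂ t₁ u₂ t₂) ∧
      -- quantitative bound, for every decomposition of h
      (∀ (N : ℕ) (hd : Fin N → ℝ → ℝ → ℝ → ℝ → ℝ → ℝ → V) (C γ₁ γ₂ : Fin N → ℝ),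
        (∀ k, 0 ≤ C k) → (∀ k, γ₁ k ∈ Set.Ioo (0:ℝ) z₁) →
        (∀ k, γ₂ k ∈ Set.Ioo (0:ℝ) z₂) →
        (∀ s₁ u₁ s₂ t₁ u₂ t₂ : ℝ, s₁ ∈ Icc 0 T → u₁ ∈ Icc 0 T → s₂ ∈ Icc 0 T →
          t₁ ∈ Icc 0 T → u₂ ∈ Icc 0 T → t₂ ∈ Icc 0 T →
          h s₁ u₁ s₂ t₁ u₂ t₂ = ∑ k, hd k s₁ u₁ s₂ t₁ u₂ t₂) →
        (∀ k, ∀ s₁ u₁ s₂ t₁ u₂ t₂ : ℝ, s₁ ∈ Icc 0 T → u₁ ∈ Icc 0 T → s₂ ∈ Icc 0 T →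
          t₁ ∈ Icc 0 T → u₂ ∈ Icc 0 T → t₂ ∈ Icc 0 T →
          ‖hd k s₁ u₁ s₂ t₁ u₂ t₂‖ ≤ C k * |u₁ - s₁| ^ (γ₁ k) * |s₂ - u₁| ^ (z₁ - γ₁ k)
            * |u₂ - t₁| ^ (γ₂ k) * |t₂ - u₂| ^ (z₂ - γ₂ k)) →
        ∀ s₁ s₂ t₁ t₂ : ℝ, s₁ ∈ Icc 0 T → s₂ ∈ Icc 0 T → t₁ ∈ Icc 0 T →
          t₂ ∈ Icc 0 T →
          ‖r s₁ s₂ t₁ t₂‖ ≤ ((2:ℝ) ^ z₁ - 2)⁻¹ * ((2:ℝ) ^ z₂ - 2)⁻¹ * (∑ k, C k)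
            * |s₂ - s₁| ^ z₁ * |t₂ - t₁| ^ z₂) ∧
      -- uniqueness
      (∀ r' : ℝ → ℝ → ℝ → ℝ → V,
        (ContinuousOn (fun q : (ℝ × ℝ) × ℝ × ℝ => r' q.1.1 q.1.2 q.2.1 q.2.2)
          ((Icc 0 T ×ˢ Icc 0 T) ×ˢ (Icc 0 T ×ˢ Icc 0 T)) ∧
          ∀ s₁ s₂ t₁ t₂ : ℝ, s₁ ∈ Icc 0 T → s₂ ∈ Icc 0 T → t₁ ∈ Icc 0 T →
            t₂ ∈ Icc 0 T → (s₁ = s₂ ∨ t₁ = t₂) → r' s₁ s₂ t₁ t₂ = 0) →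
        (∀ s₁ u₁ s₂ t₁ u₂ t₂ : ℝ, s₁ ∈ Icc 0 T → u₁ ∈ Icc 0 T → s₂ ∈ Icc 0 T →
          t₁ ∈ Icc 0 T → u₂ ∈ Icc 0 T → t₂ ∈ Icc 0 T →
          delFull r' s₁ u₁ s₂ t₁ u₂ t₂ = h s₁ u₁ s₂ t₁ u₂ t₂) →
        (∃ w₁ > (1:ℝ), ∃ w₂ > (1:ℝ), ∃ K : ℝ,
          ∀ s₁ s₂ t₁ t₂ : ℝ, s₁ ∈ Icc 0 T → s₂ ∈ Icc 0 T → t₁ ∈ Icc 0 T →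
            t₂ ∈ Icc 0 T →
            ‖r' s₁ s₂ t₁ t₂‖ ≤ K * |s₂ - s₁| ^ w₁ * |t₂ - t₁| ^ w₂) →
        ∀ s₁ s₂ t₁ t₂ : ℝ, s₁ ∈ Icc 0 T → s₂ ∈ Icc 0 T → t₁ ∈ Icc 0 T →
          t₂ ∈ Icc 0 T → r' s₁ s₂ t₁ t₂ = r s₁ s₂ t₁ t₂) := by
  obtain ⟨g, ⟨hgc, hg0⟩, hhd⟩ := hexact
  obtain ⟨N, hd, C, γ₁, γ₂, hC, hγ₁, hγ₂, hsum, hbdk⟩ := hfin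
  have hT0 : (0:ℝ) ≤ T := hT.le
  have hbound : ∀ s₁ u₁ s₂ t₁ u₂ t₂ : ℝ, s₁ ∈ Icc 0 T → u₁ ∈ Icc 0 T → s₂ ∈ Icc 0 T →
      t₁ ∈ Icc 0 T → u₂ ∈ Icc 0 T → t₂ ∈ Icc 0 T →
      ‖delFull g s₁ u₁ s₂ t₁ u₂ t₂‖ ≤ ∑ k, C k * |u₁ - s₁| ^ (γ₁ k) * |s₂ - u₁| ^ (z₁ - γ₁ k)
        * |u₂ - t₁| ^ (γ₂ k) * |t₂ - u₂| ^ (z₂ - γ₂ k) := by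
    intro s₁ u₁ s₂ t₁ u₂ t₂ hs₁ hu₁ hs₂ ht₁ hu₂ ht₂
    rw [← hhd s₁ u₁ s₂ t₁ u₂ t₂ hs₁ hu₁ hs₂ ht₁ hu₂ ht₂,
      hsum s₁ u₁ s₂ t₁ u₂ t₂ hs₁ hu₁ hs₂ ht₁ hu₂ ht₂]
    exact le_trans (norm_sum_le _ _) (Finset.sum_le_sum
      (fun k _ => hbdk k s₁ u₁ s₂ t₁ u₂ t₂ hs₁ hu₁ hs₂ ht₁ hu₂ ht₂))
  obtain ⟨hcont, hdel, hbd3⟩ := master hT hz₁ hz₂ g hgc hg0 N C γ₁ γ₂ hC hγ₁ hγ₂ hbound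
  have hκ₀ : (0:ℝ) ≤ ∑ k, C k := Finset.sum_nonneg fun k _ => hC k
  have hinv₁ : (0:ℝ) ≤ ((2:ℝ)^z₁-2)⁻¹ :=
    inv_nonneg.2 (by have := Sew2D.two_rpow_gt_two hz₁; linarith)
  have hinv₂ : (0:ℝ) ≤ ((2:ℝ)^z₂-2)⁻¹ :=
    inv_nonneg.2 (by have := Sew2D.two_rpow_gt_two hz₂; linarith)
  refine ⟨rr g, ⟨hcont, ?_⟩, ?_, ?_, ?_⟩
  · -- vanishing on diagonals
    intro s₁ s₂ t₁ t₂ hs₁ hs₂ ht₁ ht₂ hor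
    have hb := hbd3 s₁ s₂ t₁ t₂ hs₁ hs₂ ht₁ ht₂
    rcases hor with rfl | rfl
    · rw [sub_self, abs_zero, Real.zero_rpow (by linarith : z₁ ≠ 0), mul_zero, zero_mul] at hb
      exact norm_le_zero_iff.mp hb
    · rw [sub_self, abs_zero, Real.zero_rpow (by linarith : z₂ ≠ 0), mul_zero] at hb
      exact norm_le_zero_iff.mp hb
  · -- delFull r = h
    intro s₁ u₁ s₂ t₁ u₂ t₂ hs₁ hu₁ hs₂ ht₁ hu₂ ht₂
    rw [hdel s₁ u₁ s₂ t₁ u₂ t₂ hs₁ hu₁ hs₂ ht₁ hu₂ ht₂]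
    exact (hhd s₁ u₁ s₂ t₁ u₂ t₂ hs₁ hu₁ hs₂ ht₁ hu₂ ht₂).symm
  · -- quantitative bound for every decomposition
    intro N' hd' C' γ₁' γ₂' hC' hγ₁' hγ₂' hsum' hbdk' s₁ s₂ t₁ t₂ hs₁ hs₂ ht₁ ht₂
    have hbound' : ∀ s₁ u₁ s₂ t₁ u₂ t₂ : ℝ, s₁ ∈ Icc 0 T → u₁ ∈ Icc 0 T → s₂ ∈ Icc 0 T →
        t₁ ∈ Icc 0 T → u₂ ∈ Icc 0 T → t₂ ∈ Icc 0 T →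
        ‖delFull g s₁ u₁ s₂ t₁ u₂ t₂‖ ≤ ∑ k, C' k * |u₁ - s₁| ^ (γ₁' k) * |s₂ - u₁| ^ (z₁ - γ₁' k)
          * |u₂ - t₁| ^ (γ₂' k) * |t₂ - u₂| ^ (z₂ - γ₂' k) := by
      intro a b c d e f ha hb hc hd' he hf
      rw [← hhd a b c d e f ha hb hc hd' he hf, hsum' a b c d e f ha hb hc hd' he hf]
      exact le_trans (norm_sum_le _ _) (Finset.sum_le_sum
        (fun k _ => hbdk' k a b c d e f ha hb hc hd' he hf))
    exact (master hT hz₁ hz₂ g hgc hg0 N' C' γ₁' γ₂' hC' hγ₁' hγ₂' hbound').2.2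
      s₁ s₂ t₁ t₂ hs₁ hs₂ ht₁ ht₂
  · -- uniqueness
    rintro r' ⟨hr'c, hr'0⟩ hr'del ⟨w₁, hw₁, w₂, hw₂, K, hK⟩ s₁ s₂ t₁ t₂ hs₁ hs₂ ht₁ ht₂
    set M : ℝ := ((2:ℝ)^z₁-2)⁻¹ * ((2:ℝ)^z₂-2)⁻¹ * (∑ k, C k) with hM
    have hM0 : 0 ≤ M := mul_nonneg (mul_nonneg hinv₁ hinv₂) hκ₀
    have hdb : ∀ a b τ τ' : ℝ, a ∈ Icc 0 T → b ∈ Icc 0 T → τ ∈ Icc 0 T → τ' ∈ Icc 0 T →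
        ‖r' a b τ τ' - rr g a b τ τ'‖
          ≤ |K| * |b-a|^w₁ * |τ'-τ|^w₂ + M * |b-a|^z₁ * |τ'-τ|^z₂ := by
      intro a b τ τ' ha hb hτ hτ'
      refine le_trans (norm_sub_le _ _) (add_le_add ?_ ?_)
      · refine le_trans (hK a b τ τ' ha hb hτ hτ') ?_
        exact mul_le_mul_of_nonneg_right (mul_le_mul_of_nonneg_right (le_abs_self K)
          (Real.rpow_nonneg (abs_nonneg _) _)) (Real.rpow_nonneg (abs_nonneg _) _)
      · exact hbd3 a b τ τ' ha hb hτ hτ'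
    have hdF : ∀ a u b τ υ τ' : ℝ, a ∈ Icc 0 T → u ∈ Icc 0 T → b ∈ Icc 0 T →
        τ ∈ Icc 0 T → υ ∈ Icc 0 T → τ' ∈ Icc 0 T →
        delFull (fun x y p q => r' x y p q - rr g x y p q) a u b τ υ τ' = 0 := by
      intro a u b τ υ τ' ha hu hb hτ hυ hτ'
      have e : delFull (fun x y p q => r' x y p q - rr g x y p q) a u b τ υ τ'
          = delFull r' a u b τ υ τ' - delFull (rr g) a u b τ υ τ' := by
        simp only [delFull, del1]
        abel
      rw [e, hr'del a u b τ υ τ' ha hu hb hτ hυ hτ', hdel a u b τ υ τ' ha hu hb hτ hυ hτ',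
        ← hhd a u b τ υ τ' ha hu hb hτ hυ hτ', sub_self]
    -- Step 1 : del1 of the difference vanishes
    have hDzero : ∀ a u b : ℝ, a ∈ Icc 0 T → u ∈ Icc 0 T → b ∈ Icc 0 T →
        ∀ τ τ' : ℝ, τ ∈ Icc 0 T → τ' ∈ Icc 0 T →
        del1 (fun x y p q => r' x y p q - rr g x y p q) a u b τ τ' = 0 := by
      intro a u b ha hu hb τ τ' hτ hτ'
      refine additive_vanish (A := fun x y =>
          del1 (fun x y p q => r' x y p q - rr g x y p q) a u b x y) hT0
        (c₁ := 3 * |K| * T^w₁) (c₂ := 3 * M * T^z₁)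
        (by positivity) (by positivity) hw₂ hz₂ ?_ ?_ hτ hτ'
      · intro x v y hx hv hy
        have h0 : del1 (fun x y p q => r' x y p q - rr g x y p q) a u b v y
            - del1 (fun x y p q => r' x y p q - rr g x y p q) a u b x y
            + del1 (fun x y p q => r' x y p q - rr g x y p q) a u b x v = 0 :=
          hdF a u b x v y ha hu hb hx hv hy
        have h3 : del1 (fun x y p q => r' x y p q - rr g x y p q) a u b x y
            - (del1 (fun x y p q => r' x y p q - rr g x y p q) a u b x v
              + del1 (fun x y p q => r' x y p q - rr g x y p q) a u b v y)
            = -(del1 (fun x y p q => r' x y p q - rr g x y p q) a u b v y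
              - del1 (fun x y p q => r' x y p q - rr g x y p q) a u b x y
              + del1 (fun x y p q => r' x y p q - rr g x y p q) a u b x v) := by abel
        rw [h0, neg_zero] at h3
        exact sub_eq_zero.mp h3
      · intro x y hx hy
        have e : (fun x y => del1 (fun x y p q => r' x y p q - rr g x y p q) a u b x y) x y
            = (r' u b x y - rr g u b x y) - (r' a b x y - rr g a b x y)
              + (r' a u x y - rr g a u x y) := rfl
        change ‖(r' u b x y - rr g u b x y) - (r' a b x y - rr g a b x y) + (r' a u x y - rr g a u x y)‖ ≤ _
        have n1 := hdb u b x y hu hb hx hy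
        have n2 := hdb a b x y ha hb hx hy
        have n3 := hdb a u x y ha hu hx hy
        have hTw : ∀ c d : ℝ, c ∈ Icc 0 T → d ∈ Icc 0 T →
            |K| * |d-c|^w₁ * |y-x|^w₂ + M * |d-c|^z₁ * |y-x|^z₂
              ≤ |K| * T^w₁ * |y-x|^w₂ + M * T^z₁ * |y-x|^z₂ := by
          intro c d hc hd'
          have b1 : |d-c|^w₁ ≤ T^w₁ :=
            Real.rpow_le_rpow (abs_nonneg _) (abs_le_T hc hd') (by linarith)
          have b2 : |d-c|^z₁ ≤ T^z₁ :=
            Real.rpow_le_rpow (abs_nonneg _) (abs_le_T hc hd') (by linarith)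
          have r1 : (0:ℝ) ≤ |y-x|^w₂ := Real.rpow_nonneg (abs_nonneg _) _
          have r2 : (0:ℝ) ≤ |y-x|^z₂ := Real.rpow_nonneg (abs_nonneg _) _
          have k1 : (0:ℝ) ≤ |K| := abs_nonneg K
          apply add_le_add
          · exact mul_le_mul_of_nonneg_right (mul_le_mul_of_nonneg_left b1 k1) r1
          · exact mul_le_mul_of_nonneg_right (mul_le_mul_of_nonneg_left b2 hM0) r2
        calc ‖(r' u b x y - rr g u b x y) - (r' a b x y - rr g a b x y)
              + (r' a u x y - rr g a u x y)‖
            ≤ ‖(r' u b x y - rr g u b x y) - (r' a b x y - rr g a b x y)‖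
              + ‖r' a u x y - rr g a u x y‖ := norm_add_le _ _
          _ ≤ ‖r' u b x y - rr g u b x y‖ + ‖r' a b x y - rr g a b x y‖
              + ‖r' a u x y - rr g a u x y‖ := by
                have := norm_sub_le (r' u b x y - rr g u b x y) (r' a b x y - rr g a b x y)
                linarith
          _ ≤ (|K| * T^w₁ * |y-x|^w₂ + M * T^z₁ * |y-x|^z₂)
              + (|K| * T^w₁ * |y-x|^w₂ + M * T^z₁ * |y-x|^z₂)
              + (|K| * T^w₁ * |y-x|^w₂ + M * T^z₁ * |y-x|^z₂) := by
                have e1 := le_trans n1 (hTw u b hu hb)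
                have e2 := le_trans n2 (hTw a b ha hb)
                have e3 := le_trans n3 (hTw a u ha hu)
                linarith
          _ = 3 * |K| * T^w₁ * |y-x|^w₂ + 3 * M * T^z₁ * |y-x|^z₂ := by ring
    -- Step 2 : the difference vanishes
    have hfinal : r' s₁ s₂ t₁ t₂ - rr g s₁ s₂ t₁ t₂ = 0 := by
      refine additive_vanish (A := fun x y => r' x y t₁ t₂ - rr g x y t₁ t₂) hT0
        (c₁ := |K| * T^w₂) (c₂ := M * T^z₂) (by positivity) (by positivity) hw₁ hz₁ ?_ ?_ hs₁ hs₂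
      · intro x v y hx hv hy
        have h0 : (r' v y t₁ t₂ - rr g v y t₁ t₂) - (r' x y t₁ t₂ - rr g x y t₁ t₂)
            + (r' x v t₁ t₂ - rr g x v t₁ t₂) = 0 := hDzero x v y hx hv hy t₁ t₂ ht₁ ht₂
        have h3 : (r' x y t₁ t₂ - rr g x y t₁ t₂)
            - ((r' x v t₁ t₂ - rr g x v t₁ t₂) + (r' v y t₁ t₂ - rr g v y t₁ t₂))
            = -((r' v y t₁ t₂ - rr g v y t₁ t₂) - (r' x y t₁ t₂ - rr g x y t₁ t₂)
              + (r' x v t₁ t₂ - rr g x v t₁ t₂)) := by abel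
        rw [h0, neg_zero] at h3
        exact sub_eq_zero.mp h3
      · intro x y hx hy
        have n1 := hdb x y t₁ t₂ hx hy ht₁ ht₂
        have b1 : |t₂-t₁|^w₂ ≤ T^w₂ :=
          Real.rpow_le_rpow (abs_nonneg _) (abs_le_T ht₁ ht₂) (by linarith)
        have b2 : |t₂-t₁|^z₂ ≤ T^z₂ :=
          Real.rpow_le_rpow (abs_nonneg _) (abs_le_T ht₁ ht₂) (by linarith)
        have r1 : (0:ℝ) ≤ |y-x|^w₁ := Real.rpow_nonneg (abs_nonneg _) _
        have r2 : (0:ℝ) ≤ |y-x|^z₁ := Real.rpow_nonneg (abs_nonneg _) _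
        have k1 : (0:ℝ) ≤ |K| := abs_nonneg K
        refine le_trans n1 ?_
        have q1 : |K| * |y-x|^w₁ * |t₂-t₁|^w₂ ≤ (|K| * T^w₂) * |y-x|^w₁ := by
          calc |K| * |y-x|^w₁ * |t₂-t₁|^w₂ ≤ |K| * |y-x|^w₁ * T^w₂ :=
                mul_le_mul_of_nonneg_left b1 (mul_nonneg k1 r1)
            _ = (|K| * T^w₂) * |y-x|^w₁ := by ring
        have q2 : M * |y-x|^z₁ * |t₂-t₁|^z₂ ≤ (M * T^z₂) * |y-x|^z₁ := by
          calc M * |y-x|^z₁ * |t₂-t₁|^z₂ ≤ M * |y-x|^z₁ * T^z₂ :=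
                mul_le_mul_of_nonneg_left b2 (mul_nonneg hM0 r2)
            _ = (M * T^z₂) * |y-x|^z₁ := by ring
        linarith
    exact sub_eq_zero.mp hfinal
end

section
/- Let V be a Banach space, T > 0 and μ > 1, and let h ∈ 𝒞₃(V) satisfy δh = 0 and ‖h‖_μ < ∞. Then there exists a unique r ∈ 𝒞₂(V) such that δr = h and ‖r‖_ν < ∞ for some ν > 1; moreover this r satisfies ‖r‖_μ ≤ (2^μ − 2)^{−1} ‖h‖_μ. (r = Λh, the one-dimensional sewing map.) -/
open Set Finset Filter Topology

private lemma stmt5_sum_two_mul {V : Type*} [AddCommGroup V] (m : ℕ) (φ : ℕ → V) :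
    ∑ j ∈ Finset.range (2 * m), φ j
      = ∑ i ∈ Finset.range m, (φ (2 * i) + φ (2 * i + 1)) := by
  induction m with
  | zero => simp
  | succ m ih =>
      have h2 : 2 * (m + 1) = (2 * m + 1) + 1 := by ring
      rw [h2, Finset.sum_range_succ, Finset.sum_range_succ, ih, Finset.sum_range_succ]
      abel

private lemma stmt5_min_lip (a b c : ℝ) : |min a b - min a c| ≤ |b - c| := by
  have h1 := le_abs_self (b - c)
  have h2 := neg_abs_le (b - c)
  rcases le_total a b with h3 | h3 <;> rcases le_total a c with h4 | h4 <;>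
    simp only [min_eq_left, min_eq_right, h3, h4] <;> rw [abs_sub_le_iff] <;>
    constructor <;> linarith

private lemma stmt5_min_lip' (a b c : ℝ) : |min a c - min b c| ≤ |a - b| := by
  rw [min_comm a c, min_comm b c]; exact stmt5_min_lip c a b

private lemma stmt5_pow_rpow {x : ℝ} (hx : 0 ≤ x) (n : ℕ) (y : ℝ) :
    ((x ^ n : ℝ)) ^ y = (x ^ y) ^ n := by
  rw [← Real.rpow_natCast x n, ← Real.rpow_mul hx, mul_comm, Real.rpow_mul hx,
    Real.rpow_natCast]

private lemma stmt5_count {V : Type*} [SeminormedAddCommGroup V] (m : ℕ) (w : ℕ → V)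
    (c a b M : ℝ) (hc : 0 < c) (ha : 0 ≤ a) (hab : a ≤ b) (hM : 0 ≤ M)
    (hw : ∀ i ∈ Finset.range m, ‖w i‖ ≤ M)
    (hz : ∀ i : ℕ, (b ≤ (i : ℝ) * c ∨ ((i : ℝ) + 1) * c ≤ a) → w i = 0) :
    ‖∑ i ∈ Finset.range m, w i‖ ≤ ((b - a) / c + 2) * M := by
  set i0 := ⌊a / c⌋₊ with hi0
  set i1 := ⌊b / c⌋₊ with hi1
  have hbc : 0 ≤ b / c := div_nonneg (ha.trans hab) hc.le
  have hsub : ∀ i ∈ Finset.range m, w i ≠ 0 → i ∈ Finset.Icc i0 i1 := by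
    intro i _ hne
    have hcond : ¬ (b ≤ (i : ℝ) * c ∨ ((i : ℝ) + 1) * c ≤ a) := fun hcnd => hne (hz i hcnd)
    push_neg at hcond
    obtain ⟨hlt, hgt⟩ := hcond
    rw [Finset.mem_Icc]
    constructor
    · have h1 : a / c < (i : ℝ) + 1 := by
        rw [div_lt_iff₀ hc]; linarith
      have h2 : (i0 : ℝ) ≤ a / c := Nat.floor_le (div_nonneg ha hc.le)
      have : (i0 : ℝ) < (i : ℝ) + 1 := lt_of_le_of_lt h2 h1
      exact_mod_cast Nat.lt_succ_iff.mp (by exact_mod_cast this)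
    · have h1 : (i : ℝ) < b / c := by rw [lt_div_iff₀ hc]; linarith
      exact Nat.le_floor h1.le
  have hle1 : ‖∑ i ∈ Finset.range m, w i‖ ≤ ∑ i ∈ Finset.range m, ‖w i‖ :=
    norm_sum_le _ _
  have hfilter : ∑ i ∈ Finset.range m, ‖w i‖
      = ∑ i ∈ (Finset.range m).filter (fun i => i ∈ Finset.Icc i0 i1), ‖w i‖ := by
    rw [Finset.sum_filter_of_ne]
    intro i hi hne
    exact hsub i hi (fun h0 => hne (by rw [h0, norm_zero]))
  have hcard : ((Finset.range m).filter (fun i => i ∈ Finset.Icc i0 i1)).card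
      ≤ (Finset.Icc i0 i1).card := by
    apply Finset.card_le_card
    intro i hi
    exact (Finset.mem_filter.mp hi).2
  have hcardIcc : (Finset.Icc i0 i1).card = i1 + 1 - i0 := Nat.card_Icc i0 i1
  have hcastcard : (((Finset.range m).filter (fun i => i ∈ Finset.Icc i0 i1)).card : ℝ)
      ≤ (b - a) / c + 2 := by
    have h2 : ((i1 + 1 - i0 : ℕ) : ℝ) ≤ (b - a) / c + 2 := by
      have hf1 : (i1 : ℝ) ≤ b / c := Nat.floor_le hbc
      have hf2 : a / c < (i0 : ℝ) + 1 := Nat.lt_floor_add_one _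
      have hsubdiv : (b - a) / c = b / c - a / c := by rw [sub_div]
      rcases le_or_gt i0 (i1 + 1) with hle | hlt
      · rw [Nat.cast_sub hle]
        push_cast
        rw [hsubdiv]; linarith
      · have : i1 + 1 - i0 = 0 := Nat.sub_eq_zero_of_le hlt.le
        rw [this]
        have : 0 ≤ (b - a) / c := div_nonneg (by linarith) hc.le
        push_cast; linarith
    calc (((Finset.range m).filter (fun i => i ∈ Finset.Icc i0 i1)).card : ℝ)
        ≤ ((Finset.Icc i0 i1).card : ℝ) := by exact_mod_cast hcard
      _ = ((i1 + 1 - i0 : ℕ) : ℝ) := by rw [hcardIcc]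
      _ ≤ (b - a) / c + 2 := h2
  calc ‖∑ i ∈ Finset.range m, w i‖ ≤ ∑ i ∈ Finset.range m, ‖w i‖ := hle1
    _ = ∑ i ∈ (Finset.range m).filter (fun i => i ∈ Finset.Icc i0 i1), ‖w i‖ := hfilter
    _ ≤ ((Finset.range m).filter (fun i => i ∈ Finset.Icc i0 i1)).card
          • M := Finset.sum_le_card_nsmul _ _ _ (fun i hi => hw i (Finset.mem_filter.mp hi).1)
    _ = (((Finset.range m).filter (fun i => i ∈ Finset.Icc i0 i1)).card : ℝ) * M := by
          rw [nsmul_eq_mul]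
    _ ≤ ((b - a) / c + 2) * M := mul_le_mul_of_nonneg_right hcastcard hM


section stmt5aux
variable {V : Type*} [NormedAddCommGroup V] [NormedSpace ℝ V] [CompleteSpace V]

private def stmt5B (h : ℝ → ℝ → ℝ → V) : ℝ → ℝ → V := fun t s => -h 0 t s

private noncomputable def stmt5x (T : ℝ) (n i : ℕ) : ℝ := (i:ℝ) * (T / 2^n)

private noncomputable def stmt5f (h : ℝ → ℝ → ℝ → V) (T : ℝ) (n : ℕ) (t : ℝ) : V :=
  ∑ i ∈ Finset.range (2^n),
    stmt5B h (min t (stmt5x T n (i+1))) (min t (stmt5x T n i))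

private noncomputable def stmt5F (h : ℝ → ℝ → ℝ → V) (T : ℝ) (t : ℝ) : V :=
  stmt5f h T 0 t + ∑' n, (stmt5f h T (n+1) t - stmt5f h T n t)

private noncomputable def stmt5r (h : ℝ → ℝ → ℝ → V) (T : ℝ) (t s : ℝ) : V :=
  stmt5B h t s - stmt5F h T t + stmt5F h T s

private noncomputable def stmt5Q (t s : ℝ) (n i : ℕ) : ℝ := s + (i:ℝ)/2^n * (t - s)

private noncomputable def stmt5θ (y : ℝ) : ℝ := 2 * ((2:ℝ)⁻¹) ^ y

end stmt5aux

set_option maxHeartbeats 4000000 in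
/-- **One-dimensional sewing map.**
Let `V` be a Banach space, `T > 0` and `μ > 1`, and let `h ∈ 𝒞₃(V)` satisfy `δh = 0`
and `‖h‖_μ < ∞` (the latter being witnessed by a finite decomposition `h = Σ hdec k`
with `‖hdec k‖_{ρ k, μ - ρ k} ≤ C k`).  Then there exists a unique `r ∈ 𝒞₂(V)` such
that `δr = h` and `‖r‖_ν < ∞` for some `ν > 1`; moreover this `r` satisfies
`‖r‖_μ ≤ (2^μ - 2)⁻¹ ‖h‖_μ` (expressed through arbitrary decompositions of `h`). -/
theorem stmt5
    {V : Type*} [NormedAddCommGroup V] [NormedSpace ℝ V] [CompleteSpace V]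
    (T : ℝ) (hT : 0 < T) (μ : ℝ) (hμ : 1 < μ)
    (h : ℝ → ℝ → ℝ → V)
    (hcont : ContinuousOn (fun p : ℝ × ℝ × ℝ => h p.1 p.2.1 p.2.2)
      (Icc 0 T ×ˢ Icc 0 T ×ˢ Icc 0 T))
    (hvanish : ∀ t u s, t ∈ Icc 0 T → u ∈ Icc 0 T → s ∈ Icc 0 T →
      (t = u ∨ u = s) → h t u s = 0)
    (hcocycle : ∀ a b c d, a ∈ Icc 0 T → b ∈ Icc 0 T → c ∈ Icc 0 T → d ∈ Icc 0 T →
      h b c d - h a c d + h a b d - h a b c = 0)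
    -- `‖h‖_μ < ∞`: existence of one finite decomposition
    (hfin : ∃ (N : ℕ) (hdec : Fin N → ℝ → ℝ → ℝ → V) (C ρ : Fin N → ℝ),
      (∀ k, 0 ≤ C k) ∧ (∀ k, ρ k ∈ Set.Ioo (0:ℝ) μ) ∧
      (∀ t u s, t ∈ Icc 0 T → u ∈ Icc 0 T → s ∈ Icc 0 T →
        h t u s = ∑ k, hdec k t u s) ∧
      (∀ k, ∀ t u s, t ∈ Icc 0 T → u ∈ Icc 0 T → s ∈ Icc 0 T →
        ‖hdec k t u s‖ ≤ C k * |t - u| ^ (ρ k) * |u - s| ^ (μ - ρ k))) :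
    ∃ r : ℝ → ℝ → V,
      -- r ∈ 𝒞₂(V)
      (ContinuousOn (fun p : ℝ × ℝ => r p.1 p.2) (Icc 0 T ×ˢ Icc 0 T) ∧
        ∀ t ∈ Icc 0 T, r t t = 0) ∧
      -- δr = h
      (∀ t u s, t ∈ Icc 0 T → u ∈ Icc 0 T → s ∈ Icc 0 T →
        h t u s = r t s - r t u - r u s) ∧
      -- ‖r‖_ν < ∞ for some ν > 1
      (∃ ν > (1:ℝ), ∃ K : ℝ, ∀ t s, t ∈ Icc 0 T → s ∈ Icc 0 T →
        ‖r t s‖ ≤ K * |t - s| ^ ν) ∧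
      -- ‖r‖_μ ≤ (2^μ - 2)⁻¹ ‖h‖_μ : the bound holds for every decomposition of h
      (∀ (N : ℕ) (hdec : Fin N → ℝ → ℝ → ℝ → V) (C ρ : Fin N → ℝ),
        (∀ k, 0 ≤ C k) → (∀ k, ρ k ∈ Set.Ioo (0:ℝ) μ) →
        (∀ t u s, t ∈ Icc 0 T → u ∈ Icc 0 T → s ∈ Icc 0 T →
          h t u s = ∑ k, hdec k t u s) →
        (∀ k, ∀ t u s, t ∈ Icc 0 T → u ∈ Icc 0 T → s ∈ Icc 0 T →
          ‖hdec k t u s‖ ≤ C k * |t - u| ^ (ρ k) * |u - s| ^ (μ - ρ k)) →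
        ∀ t s, t ∈ Icc 0 T → s ∈ Icc 0 T →
          ‖r t s‖ ≤ ((2:ℝ) ^ μ - 2)⁻¹ * (∑ k, C k) * |t - s| ^ μ) ∧
      -- uniqueness
      (∀ r' : ℝ → ℝ → V,
        (ContinuousOn (fun p : ℝ × ℝ => r' p.1 p.2) (Icc 0 T ×ˢ Icc 0 T) ∧
          ∀ t ∈ Icc 0 T, r' t t = 0) →
        (∀ t u s, t ∈ Icc 0 T → u ∈ Icc 0 T → s ∈ Icc 0 T →
          h t u s = r' t s - r' t u - r' u s) →
        (∃ ν > (1:ℝ), ∃ K : ℝ, ∀ t s, t ∈ Icc 0 T → s ∈ Icc 0 T →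
          ‖r' t s‖ ≤ K * |t - s| ^ ν) →
        ∀ t s, t ∈ Icc 0 T → s ∈ Icc 0 T → r' t s = r t s) := by
  obtain ⟨N₀, hdec, C, ρ, hC, hρ, hsum, hb⟩ := hfin
  have h0T : (0:ℝ) ∈ Icc (0:ℝ) T := ⟨le_refl 0, hT.le⟩
  have hμ0 : μ ≠ 0 := by positivity
  set CS : ℝ := ∑ k, C k with hCSdef
  have hCS : 0 ≤ CS := Finset.sum_nonneg (fun k _ => hC k)
  -- the primitive B with δB = h
  set B : ℝ → ℝ → V := stmt5B h with hBdef
  have hBeq : ∀ a b : ℝ, B a b = -h 0 a b := fun a b => rfl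
  have hδB : ∀ t u s, t ∈ Icc 0 T → u ∈ Icc 0 T → s ∈ Icc 0 T →
      B t s - B t u - B u s = h t u s := by
    intro t u s ht hu hs
    have h1 := hcocycle 0 t u s h0T ht hu hs
    have key : B t s - B t u - B u s - h t u s
        = -(h t u s - h 0 u s + h 0 t s - h 0 t u) := by simp only [hBeq]; abel
    rw [h1, neg_zero] at key
    exact sub_eq_zero.mp key
  -- uniform Hölder bound for h, for an arbitrary decomposition
  have hHB : ∀ (M : ℕ) (hd : Fin M → ℝ → ℝ → ℝ → V) (Cc rr : Fin M → ℝ),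
      (∀ k, 0 ≤ Cc k) → (∀ k, rr k ∈ Set.Ioo (0:ℝ) μ) →
      (∀ a b c, a ∈ Icc 0 T → b ∈ Icc 0 T → c ∈ Icc 0 T → h a b c = ∑ k, hd k a b c) →
      (∀ k, ∀ a b c, a ∈ Icc 0 T → b ∈ Icc 0 T → c ∈ Icc 0 T →
        ‖hd k a b c‖ ≤ Cc k * |a - b| ^ (rr k) * |b - c| ^ (μ - rr k)) →
      ∀ a b c, a ∈ Icc 0 T → b ∈ Icc 0 T → c ∈ Icc 0 T → ∀ e : ℝ, 0 ≤ e →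
        |a - b| ≤ e → |b - c| ≤ e → ‖h a b c‖ ≤ (∑ k, Cc k) * e ^ μ := by
    intro M hd Cc rr hCc hrr hsum' hb' a b c hha hhb hhc e he h1 h2
    rw [hsum' a b c hha hhb hhc]
    calc ‖∑ k, hd k a b c‖ ≤ ∑ k, ‖hd k a b c‖ := norm_sum_le _ _
      _ ≤ ∑ k : Fin M, Cc k * e ^ μ := by
          apply Finset.sum_le_sum
          intro k _
          have hk := hb' k a b c hha hhb hhc
          have e1 : |a - b| ^ (rr k) ≤ e ^ (rr k) :=
            Real.rpow_le_rpow (abs_nonneg _) h1 (hrr k).1.le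
          have e2 : |b - c| ^ (μ - rr k) ≤ e ^ (μ - rr k) :=
            Real.rpow_le_rpow (abs_nonneg _) h2 (by have := (hrr k).2; linarith)
          have hmul : Cc k * |a - b| ^ (rr k) * |b - c| ^ (μ - rr k)
              ≤ Cc k * e ^ (rr k) * e ^ (μ - rr k) := by
            have hcc : 0 ≤ Cc k * e ^ (rr k) := by
              have : (0:ℝ) ≤ e ^ (rr k) := Real.rpow_nonneg he _
              exact mul_nonneg (hCc k) this
            apply mul_le_mul (mul_le_mul_of_nonneg_left e1 (hCc k)) e2 (by positivity) hcc
          have hsplit : rr k + (μ - rr k) = μ := by ring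
          have heμ : e ^ (rr k) * e ^ (μ - rr k) = e ^ μ := by
            rw [← Real.rpow_add' he (by rw [hsplit]; exact hμ0), hsplit]
          calc ‖hd k a b c‖ ≤ Cc k * |a - b| ^ (rr k) * |b - c| ^ (μ - rr k) := hk
            _ ≤ Cc k * e ^ (rr k) * e ^ (μ - rr k) := hmul
            _ = Cc k * e ^ μ := by rw [mul_assoc, heμ]
      _ = (∑ k, Cc k) * e ^ μ := by rw [Finset.sum_mul]
  -- geometric shape constants
  set θf : ℝ → ℝ := stmt5θ with hθfdef
  have hθeq : ∀ y : ℝ, θf y = 2 * ((2:ℝ)⁻¹) ^ y := fun y => rfl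
  have hθpos : ∀ y, 0 < θf y := by
    intro y
    have : (0:ℝ) < ((2:ℝ)⁻¹) ^ y := Real.rpow_pos_of_pos (by norm_num) y
    rw [hθeq]; linarith
  have hθlt : ∀ y : ℝ, 1 < y → θf y < 1 := by
    intro y hy
    have : ((2:ℝ)⁻¹) ^ y < ((2:ℝ)⁻¹) ^ (1:ℝ) :=
      Real.rpow_lt_rpow_of_exponent_gt (by norm_num) (by norm_num) hy
    rw [Real.rpow_one] at this
    rw [hθeq]; linarith
  have hshape : ∀ (y : ℝ) (e : ℝ), 0 ≤ e → ∀ m : ℕ,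
      (2:ℝ)^m * (e / 2^m) ^ y = e ^ y * (θf y) ^ m := by
    intro y e he m
    have hrw : e / 2^m = e * ((2:ℝ)⁻¹) ^ m := by
      rw [div_eq_mul_inv, ← inv_pow]
    rw [hrw, Real.mul_rpow he (by positivity), stmt5_pow_rpow (by norm_num : (0:ℝ) ≤ 2⁻¹) m y,
      hθeq, mul_pow]
    ring
  -- the dyadic grid
  set x : ℕ → ℕ → ℝ := stmt5x T with hxdef
  have hxeq : ∀ n i, x n i = (i:ℝ) * (T / 2^n) := fun n i => rfl
  have hx0 : ∀ n i, 0 ≤ x n i := by intro n i; rw [hxeq]; positivity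
  have hxmono : ∀ n i j, i ≤ j → x n i ≤ x n j := by
    intro n i j hij
    rw [hxeq, hxeq]
    apply mul_le_mul_of_nonneg_right (by exact_mod_cast hij) (by positivity)
  have hxgap : ∀ n i, x n (i+1) - x n i = T / 2^n := by
    intro n i; rw [hxeq, hxeq]; push_cast; ring
  have hxmem : ∀ (t : ℝ), t ∈ Icc (0:ℝ) T → ∀ n i, min t (x n i) ∈ Icc (0:ℝ) T :=
    fun t ht n i => ⟨le_min ht.1 (hx0 n i), (min_le_left _ _).trans ht.2⟩
  have hxdouble : ∀ n i, x (n+1) (2*i) = x n i := by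
    intro n i
    rw [hxeq, hxeq]
    have h2 : (2:ℝ)^(n+1) = 2^n * 2 := by rw [pow_succ]
    rw [h2]
    push_cast
    have hne : (2:ℝ)^n ≠ 0 := by positivity
    field_simp
  set f : ℕ → ℝ → V := stmt5f h T with hfdef
  have hfeq : ∀ n t, f n t = ∑ i ∈ Finset.range (2^n), B (min t (x n (i+1))) (min t (x n i)) :=
    fun n t => rfl
  have hL3 : ∀ n (t : ℝ), t ∈ Icc (0:ℝ) T → f (n+1) t - f n t
      = -∑ i ∈ Finset.range (2^n),
          h (min t (x (n+1) (2*i+2))) (min t (x (n+1) (2*i+1))) (min t (x (n+1) (2*i))) := by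
    intro n t ht
    have hsplit : f (n+1) t = ∑ i ∈ Finset.range (2^n),
        (B (min t (x (n+1) (2*i+1))) (min t (x (n+1) (2*i)))
          + B (min t (x (n+1) (2*i+2))) (min t (x (n+1) (2*i+1)))) := by
      rw [hfeq]
      rw [pow_succ, mul_comm ((2:ℕ)^n) 2, stmt5_sum_two_mul]
    have hterm : ∀ i ∈ Finset.range (2^n),
        B (min t (x (n+1) (2*i+1))) (min t (x (n+1) (2*i)))
          + B (min t (x (n+1) (2*i+2))) (min t (x (n+1) (2*i+1)))
        = B (min t (x n (i+1))) (min t (x n i))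
          - h (min t (x (n+1) (2*i+2))) (min t (x (n+1) (2*i+1))) (min t (x (n+1) (2*i))) := by
      intro i _
      have hd := hδB (min t (x (n+1) (2*i+2))) (min t (x (n+1) (2*i+1))) (min t (x (n+1) (2*i)))
        (hxmem t ht _ _) (hxmem t ht _ _) (hxmem t ht _ _)
      have e1 : x n (i+1) = x (n+1) (2*i+2) := by
        rw [← hxdouble n (i+1)]
        congr 1 <;> omega
      have e2 : x n i = x (n+1) (2*i) := (hxdouble n i).symm
      rw [e1, e2, ← hd]
      abel
    rw [hsplit, Finset.sum_congr rfl hterm, Finset.sum_sub_distrib, hfeq]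
    abel
  have hfd_bound : ∀ n (t : ℝ), t ∈ Icc (0:ℝ) T →
      ‖f (n+1) t - f n t‖ ≤ CS * (T/2)^μ * (θf μ)^n := by
    intro n t ht
    rw [hL3 n t ht, norm_neg]
    have hgap1 : ∀ i : ℕ, |x (n+1) (i+1) - x (n+1) i| = T/2^(n+1) := by
      intro i
      rw [hxgap (n+1) i]
      exact abs_of_nonneg (by positivity)
    have hM : ∀ i ∈ Finset.range (2^n),
        ‖h (min t (x (n+1) (2*i+2))) (min t (x (n+1) (2*i+1))) (min t (x (n+1) (2*i)))‖
          ≤ CS * (T / 2^(n+1)) ^ μ := by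
      intro i _
      apply hHB N₀ hdec C ρ hC hρ hsum hb _ _ _ (hxmem t ht _ _) (hxmem t ht _ _)
        (hxmem t ht _ _) (T/2^(n+1)) (by positivity)
      · refine (stmt5_min_lip t _ _).trans ?_
        rw [show (2*i+2) = (2*i+1)+1 from rfl] at *
        rw [(hgap1 (2*i+1) : _)]
      · refine (stmt5_min_lip t _ _).trans ?_
        rw [(hgap1 (2*i) : _)]
    calc ‖∑ i ∈ Finset.range (2^n),
        h (min t (x (n+1) (2*i+2))) (min t (x (n+1) (2*i+1))) (min t (x (n+1) (2*i)))‖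
        ≤ ∑ i ∈ Finset.range (2^n), ‖h (min t (x (n+1) (2*i+2))) (min t (x (n+1) (2*i+1)))
            (min t (x (n+1) (2*i)))‖ := norm_sum_le _ _
      _ ≤ (Finset.range (2^n)).card • (CS * (T / 2^(n+1)) ^ μ) :=
          Finset.sum_le_card_nsmul _ _ _ hM
      _ = (2^n : ℝ) * (CS * (T / 2^(n+1)) ^ μ) := by
          rw [Finset.card_range, nsmul_eq_mul]
          push_cast
          ring
      _ = CS * ((2:ℝ)^n * ((T/2) / 2^n) ^ μ) := by
          rw [show T / 2^(n+1) = (T/2)/2^n from by rw [pow_succ]; ring]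
          ring
      _ = CS * (T/2)^μ * (θf μ)^n := by
          rw [hshape μ (T/2) (by positivity) n]
          ring
  have hsummf : ∀ (t : ℝ), t ∈ Icc (0:ℝ) T → Summable (fun n => f (n+1) t - f n t) := by
    intro t ht
    apply Summable.of_norm_bounded
      ((summable_geometric_of_lt_one (hθpos μ).le (hθlt μ hμ)).mul_left (CS * (T/2)^μ))
    exact fun n => hfd_bound n t ht
  set F : ℝ → V := stmt5F h T with hFdef
  have hFeq : ∀ t, F t = f 0 t + ∑' n, (f (n+1) t - f n t) := fun t => rfl
  set r : ℝ → ℝ → V := stmt5r h T with hrdef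
  have hreq : ∀ t s, r t s = B t s - F t + F s := fun t s => rfl
  have hFf : ∀ (m : ℕ) (t : ℝ), t ∈ Icc (0:ℝ) T →
      F t - f m t = ∑' n, (f (n + m + 1) t - f (n + m) t) := by
    intro m t ht
    have h1 := Summable.sum_add_tsum_nat_add (f := fun n => f (n+1) t - f n t) m (hsummf t ht)
    have h2 : ∑ i ∈ Finset.range m, (f (i+1) t - f i t) = f m t - f 0 t :=
      Finset.sum_range_sub (fun i => f i t) m
    rw [hFeq, ← h1, h2]
    abel
  -- diagonal vanishing
  have hBdiag : ∀ t : ℝ, t ∈ Icc (0:ℝ) T → B t t = 0 := by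
    intro t ht
    rw [hBeq, hvanish 0 t t h0T ht ht (Or.inr rfl), neg_zero]
  have hrdiag : ∀ t : ℝ, t ∈ Icc (0:ℝ) T → r t t = 0 := by
    intro t ht
    rw [hreq, hBdiag t ht]
    abel
  -- δ r = h, on all triples
  have hδr : ∀ t u s, t ∈ Icc (0:ℝ) T → u ∈ Icc (0:ℝ) T → s ∈ Icc (0:ℝ) T →
      h t u s = r t s - r t u - r u s := by
    intro t u s ht hu hs
    have := hδB t u s ht hu hs
    rw [hreq, hreq, hreq, ← this]
    abel
  -- the main Hölder bound for r
  set K : ℝ := 6 * CS * (2:ℝ)^μ + 6 * CS * (1 - θf μ)⁻¹ with hKdef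
  have hK0 : 0 ≤ K := by
    have h1 : 0 < (2:ℝ)^μ := Real.rpow_pos_of_pos (by norm_num) μ
    have h2 : 0 < 1 - θf μ := by have := hθlt μ hμ; linarith
    have h3 : 0 ≤ (1 - θf μ)⁻¹ := by positivity
    simp only [hKdef]; positivity
  have hmain : ∀ t s : ℝ, t ∈ Icc (0:ℝ) T → s ∈ Icc (0:ℝ) T →
      ‖r t s‖ ≤ K * |t - s| ^ μ := by
    intro t s ht hs
    rcases eq_or_ne t s with rfl | hne
    · rw [hrdiag t ht, norm_zero]
      have : (0:ℝ) ≤ |t - t| ^ μ := Real.rpow_nonneg (abs_nonneg _) μ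
      nlinarith
    · have hd0 : 0 < |t - s| := abs_pos.mpr (sub_ne_zero.mpr hne)
      have hdT : |t - s| ≤ T := by
        rw [abs_sub_le_iff]
        constructor <;> linarith [ht.1, ht.2, hs.1, hs.2]
      have hθμ1 := hθlt μ hμ
      have hθμ0 := hθpos μ
      have h1θ : 0 < 1 - θf μ := by linarith
      have hmupos : (0:ℝ) ≤ μ := by linarith
      -- choice of the matching dyadic scale
      obtain ⟨N, hN1, hN2⟩ : ∃ N : ℕ, |t - s| ≤ T/2^N ∧ T/2^N ≤ 2*|t - s| := by
        have hTd1 : (1:ℝ) ≤ T/|t - s| := (one_le_div hd0).mpr hdT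
        have hm1 : 1 ≤ ⌊T/|t - s|⌋₊ := Nat.le_floor (by exact_mod_cast hTd1)
        refine ⟨Nat.log 2 ⌊T/|t - s|⌋₊, ?_, ?_⟩
        · have h1 : (2:ℕ)^(Nat.log 2 ⌊T/|t - s|⌋₊) ≤ ⌊T/|t - s|⌋₊ :=
            Nat.pow_log_le_self 2 (by omega)
          have h2 : ((2:ℝ))^(Nat.log 2 ⌊T/|t - s|⌋₊) ≤ T/|t - s| := by
            calc ((2:ℝ))^(Nat.log 2 ⌊T/|t - s|⌋₊) = ((2^(Nat.log 2 ⌊T/|t - s|⌋₊) : ℕ) : ℝ) := by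
                  push_cast; ring
              _ ≤ (⌊T/|t - s|⌋₊ : ℝ) := by exact_mod_cast h1
              _ ≤ T/|t - s| := Nat.floor_le (by positivity)
          rw [le_div_iff₀ (by positivity : (0:ℝ) < 2^(Nat.log 2 ⌊T/|t - s|⌋₊))]
          rw [le_div_iff₀ hd0] at h2
          linarith
        · have h1 : ⌊T/|t - s|⌋₊ < 2^(Nat.log 2 ⌊T/|t - s|⌋₊ + 1) :=
            Nat.lt_pow_succ_log_self (by norm_num) _
          have h2 : T/|t - s| < ((⌊T/|t - s|⌋₊ : ℝ) + 1) := Nat.lt_floor_add_one _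
          have h3 : ((⌊T/|t - s|⌋₊ : ℝ) + 1) ≤ ((2:ℝ))^(Nat.log 2 ⌊T/|t - s|⌋₊ + 1) := by
            have := Nat.succ_le_of_lt h1
            calc ((⌊T/|t - s|⌋₊ : ℝ) + 1) = ((⌊T/|t - s|⌋₊ + 1 : ℕ) : ℝ) := by push_cast; ring
              _ ≤ ((2^(Nat.log 2 ⌊T/|t - s|⌋₊ + 1) : ℕ) : ℝ) := by exact_mod_cast this
              _ = ((2:ℝ))^(Nat.log 2 ⌊T/|t - s|⌋₊ + 1) := by push_cast; ring
          have h4 : T/|t - s| < 2 * 2^(Nat.log 2 ⌊T/|t - s|⌋₊) := by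
            rw [pow_succ] at h3; linarith
          rw [div_le_iff₀ (by positivity : (0:ℝ) < 2^(Nat.log 2 ⌊T/|t - s|⌋₊))]
          rw [div_lt_iff₀ hd0] at h4
          nlinarith [hd0]
      have hsp0 : (0:ℝ) < T/2^N := by positivity
      have hminmem : (0:ℝ) ≤ min t s := le_min ht.1 hs.1
      -- head estimate
      have hhead : ‖B t s - (f N t - f N s)‖ ≤ 3 * (2 * (CS * (T/2^N) ^ μ)) := by
        have hident : B t s - (f N t - f N s)
            = ∑ i ∈ Finset.range (2^N),
                (h (min t (x N (i+1))) (min t (x N i)) (min s (x N i))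
                 - h (min t (x N (i+1))) (min s (x N (i+1))) (min s (x N i))) := by
          have hendT : x N (2^N) = T := by
            rw [hxeq]
            have : ((2:ℝ))^N ≠ 0 := by positivity
            push_cast
            field_simp
          have hend0 : x N 0 = 0 := by rw [hxeq]; norm_num
          have htele : ∑ i ∈ Finset.range (2^N),
              (B (min t (x N (i+1))) (min s (x N (i+1))) - B (min t (x N i)) (min s (x N i)))
              = B t s := by
            rw [Finset.sum_range_sub (fun i => B (min t (x N i)) (min s (x N i))) (2^N)]
            rw [hendT, hend0, min_eq_left ht.2, min_eq_left hs.2,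
              min_eq_right ht.1, min_eq_right hs.1, hBdiag 0 h0T, sub_zero]
          have hcell : ∀ i ∈ Finset.range (2^N),
              B (min t (x N (i+1))) (min s (x N (i+1))) - B (min t (x N i)) (min s (x N i))
              = (B (min t (x N (i+1))) (min t (x N i)) - B (min s (x N (i+1))) (min s (x N i)))
                + (h (min t (x N (i+1))) (min t (x N i)) (min s (x N i))
                   - h (min t (x N (i+1))) (min s (x N (i+1))) (min s (x N i))) := by
            intro i _
            have e1 := hδB (min t (x N (i+1))) (min t (x N i)) (min s (x N i))
              (hxmem t ht N (i+1)) (hxmem t ht N i) (hxmem s hs N i)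
            have e2 := hδB (min t (x N (i+1))) (min s (x N (i+1))) (min s (x N i))
              (hxmem t ht N (i+1)) (hxmem s hs N (i+1)) (hxmem s hs N i)
            rw [← e1, ← e2]
            abel
          have h1 : B t s
              = (f N t - f N s) + ∑ i ∈ Finset.range (2^N),
                (h (min t (x N (i+1))) (min t (x N i)) (min s (x N i))
                 - h (min t (x N (i+1))) (min s (x N (i+1))) (min s (x N i))) := by
            rw [← htele, Finset.sum_congr rfl hcell, Finset.sum_add_distrib,
              hfeq, hfeq, ← Finset.sum_sub_distrib]
          rw [h1]
          abel
        rw [hident]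
        have hM0 : (0:ℝ) ≤ 2 * (CS * (T/2^N) ^ μ) := by
          have : (0:ℝ) ≤ (T/2^N) ^ μ := Real.rpow_nonneg hsp0.le μ
          nlinarith
        have hcount := stmt5_count (2^N)
          (fun i => h (min t (x N (i+1))) (min t (x N i)) (min s (x N i))
                 - h (min t (x N (i+1))) (min s (x N (i+1))) (min s (x N i)))
          (T/2^N) (min t s) (max t s) (2 * (CS * (T/2^N) ^ μ)) hsp0 hminmem
          (min_le_max) hM0 ?_ ?_
        · refine hcount.trans ?_
          rw [max_sub_min_eq_abs, abs_sub_comm s t]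
          have hdc : |t - s| / (T/2^N) ≤ 1 := by
            rw [div_le_one hsp0]; exact hN1
          apply mul_le_mul_of_nonneg_right _ hM0
          have habs' : |s - t| = |t - s| := abs_sub_comm s t
          linarith
        · -- norm bound on each cell
          intro i _
          have habsgap : ∀ (u : ℝ) (j : ℕ), |min u (x N (j+1)) - min u (x N j)| ≤ T/2^N := by
            intro u j
            refine (stmt5_min_lip u _ _).trans ?_
            rw [hxgap N j]
            exact le_of_eq (abs_of_nonneg hsp0.le)
          have habsts : ∀ j : ℕ, |min t (x N j) - min s (x N j)| ≤ T/2^N := by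
            intro j
            refine (stmt5_min_lip' t s (x N j)).trans hN1
          refine (norm_sub_le _ _).trans ?_
          have hb1 : ‖h (min t (x N (i+1))) (min t (x N i)) (min s (x N i))‖
              ≤ CS * (T/2^N) ^ μ :=
            hHB N₀ hdec C ρ hC hρ hsum hb _ _ _ (hxmem t ht N (i+1)) (hxmem t ht N i)
              (hxmem s hs N i) (T/2^N) hsp0.le (habsgap t i) (habsts i)
          have hb2 : ‖h (min t (x N (i+1))) (min s (x N (i+1))) (min s (x N i))‖
              ≤ CS * (T/2^N) ^ μ :=
            hHB N₀ hdec C ρ hC hρ hsum hb _ _ _ (hxmem t ht N (i+1)) (hxmem s hs N (i+1))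
              (hxmem s hs N i) (T/2^N) hsp0.le (habsts (i+1)) (habsgap s i)
          linarith
        · -- vanishing off the active window
          intro i hcond
          beta_reduce
          have hxi : (i:ℝ) * (T/2^N) = x N i := (hxeq N i).symm
          have hxi1 : ((i:ℝ)+1) * (T/2^N) = x N (i+1) := by
            rw [hxeq]; push_cast; ring
          rcases hcond with hcase | hcase
          · rw [hxi] at hcase
            have hti : min t (x N i) = t := min_eq_left ((le_max_left t s).trans hcase)
            have hti1 : min t (x N (i+1)) = t :=
              min_eq_left (((le_max_left t s).trans hcase).trans (hxmono N i (i+1) (by omega)))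
            have hsi : min s (x N i) = s := min_eq_left ((le_max_right t s).trans hcase)
            have hsi1 : min s (x N (i+1)) = s :=
              min_eq_left (((le_max_right t s).trans hcase).trans (hxmono N i (i+1) (by omega)))
            rw [hti, hti1, hsi, hsi1, hvanish t t s ht ht hs (Or.inl rfl),
              hvanish t s s ht hs hs (Or.inr rfl), sub_zero]
          · rw [hxi1] at hcase
            have hle1 : x N (i+1) ≤ t := (hcase.trans (min_le_left t s))
            have hle1s : x N (i+1) ≤ s := (hcase.trans (min_le_right t s))
            have hle0 : x N i ≤ x N (i+1) := hxmono N i (i+1) (by omega)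
            have hxm1 : x N (i+1) ∈ Icc (0:ℝ) T := ⟨hx0 N (i+1), hle1.trans ht.2⟩
            have hxm0 : x N i ∈ Icc (0:ℝ) T := ⟨hx0 N i, (hle0.trans hle1).trans ht.2⟩
            rw [min_eq_right hle1, min_eq_right (hle0.trans hle1),
              min_eq_right hle1s, min_eq_right (hle0.trans hle1s),
              hvanish _ _ _ hxm1 hxm0 hxm0 (Or.inr rfl),
              hvanish _ _ _ hxm1 hxm1 hxm0 (Or.inl rfl), sub_zero]
      -- tail estimate
      have htail : ‖(F t - F s) - (f N t - f N s)‖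
          ≤ 6*CS*|t - s|^μ * (1 - θf μ)⁻¹ := by
        have hsum_t : Summable (fun n => f (n + N + 1) t - f (n + N) t) :=
          (summable_nat_add_iff N).mpr (hsummf t ht)
        have hsum_s : Summable (fun n => f (n + N + 1) s - f (n + N) s) :=
          (summable_nat_add_iff N).mpr (hsummf s hs)
        have hdiffeq : (F t - F s) - (f N t - f N s)
            = ∑' n, ((f (n+N+1) t - f (n+N) t) - (f (n+N+1) s - f (n+N) s)) := by
          rw [Summable.tsum_sub hsum_t hsum_s, ← hFf N t ht, ← hFf N s hs]
          abel
        rw [hdiffeq]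
        have hterm : ∀ n : ℕ,
            ‖(f (n+N+1) t - f (n+N) t) - (f (n+N+1) s - f (n+N) s)‖
            ≤ (6*CS*|t - s|^μ) * (θf μ)^n := by
          intro n
          have hLt := hL3 (n+N) t ht
          have hLs := hL3 (n+N) s hs
          have hrw : (f (n+N+1) t - f (n+N) t) - (f (n+N+1) s - f (n+N) s)
              = -∑ i ∈ Finset.range (2^(n+N)),
                  ((h (min t (x (n+N+1) (2*i+2))) (min t (x (n+N+1) (2*i+1)))
                      (min t (x (n+N+1) (2*i))))
                   - (h (min s (x (n+N+1) (2*i+2))) (min s (x (n+N+1) (2*i+1)))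
                      (min s (x (n+N+1) (2*i))))) := by
            rw [show f (n+N+1) t = f ((n+N)+1) t from rfl, show f (n+N+1) s = f ((n+N)+1) s from rfl,
              hLt, hLs, Finset.sum_sub_distrib]
            abel
          rw [hrw, norm_neg]
          have hspn : (0:ℝ) < T/2^(n+N) := by positivity
          have hspn1 : (0:ℝ) < T/2^(n+N+1) := by positivity
          have hM0 : (0:ℝ) ≤ 2 * (CS * (T/2^(n+N+1)) ^ μ) := by
            have : (0:ℝ) ≤ (T/2^(n+N+1)) ^ μ := Real.rpow_nonneg hspn1.le μ
            nlinarith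
          have hcount := stmt5_count (2^(n+N))
            (fun i => (h (min t (x (n+N+1) (2*i+2))) (min t (x (n+N+1) (2*i+1)))
                      (min t (x (n+N+1) (2*i))))
                   - (h (min s (x (n+N+1) (2*i+2))) (min s (x (n+N+1) (2*i+1)))
                      (min s (x (n+N+1) (2*i)))))
            (T/2^(n+N)) (min t s) (max t s) (2 * (CS * (T/2^(n+N+1)) ^ μ)) hspn hminmem
            min_le_max hM0 ?_ ?_
          · refine hcount.trans ?_
            rw [max_sub_min_eq_abs, abs_sub_comm s t]
            have hcount1 : |t - s| / (T/2^(n+N)) ≤ 2^n := by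
              rw [div_le_iff₀ hspn]
              have h1 : |t - s| * 2^N ≤ T := by
                rw [le_div_iff₀ (by positivity : (0:ℝ) < 2^N)] at hN1
                linarith
              calc |t - s| ≤ T / 2^N := hN1
                _ ≤ 2^n * (T/2^(n+N)) := by
                    rw [pow_add]
                    rw [div_le_iff₀ (by positivity : (0:ℝ) < 2^N)]
                    have : (2:ℝ)^n * (T / (2^n * 2^N)) * 2^N = T := by
                      field_simp
                    rw [this]
            have hcount2 : |t - s| / (T/2^(n+N)) + 2 ≤ 3 * 2^n := by
              have h2n : (1:ℝ) ≤ 2^n := one_le_pow₀ (by norm_num)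
              linarith
            have hmle : (T/2^(n+N+1)) ^ μ ≤ (|t - s|/2^n) ^ μ := by
              apply Real.rpow_le_rpow hspn1.le _ hmupos
              have : T/2^(N+1) ≤ |t - s| := by
                rw [pow_succ, div_le_iff₀ (by positivity : (0:ℝ) < 2^N * 2)]
                rw [div_le_iff₀ (by positivity : (0:ℝ) < 2^N)] at hN2
                linarith
              calc T/2^(n+N+1) = (T/2^(N+1))/2^n := by
                    rw [show n+N+1 = (N+1)+n from by ring, pow_add]
                    ring
                _ ≤ |t - s|/2^n := by gcongr
            calc (|t - s| / (T/2^(n+N)) + 2) * (2 * (CS * (T/2^(n+N+1)) ^ μ))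
                ≤ (3 * 2^n) * (2 * (CS * (|t - s|/2^n) ^ μ)) := by
                  apply mul_le_mul hcount2 _ hM0 (by positivity)
                  have : CS * (T/2^(n+N+1)) ^ μ ≤ CS * (|t - s|/2^n) ^ μ :=
                    mul_le_mul_of_nonneg_left hmle hCS
                  linarith
              _ = (6*CS) * ((2:ℝ)^n * (|t - s|/2^n) ^ μ) := by ring
              _ = (6*CS*|t - s|^μ) * (θf μ)^n := by
                  rw [hshape μ _ (abs_nonneg _) n]
                  ring
          · -- norms of the cells
            intro i _
            have habsgap : ∀ (u : ℝ) (j : ℕ),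
                |min u (x (n+N+1) (j+1)) - min u (x (n+N+1) j)| ≤ T/2^(n+N+1) := by
              intro u j
              refine (stmt5_min_lip u _ _).trans ?_
              rw [hxgap (n+N+1) j]
              exact le_of_eq (abs_of_nonneg hspn1.le)
            refine (norm_sub_le _ _).trans ?_
            have hb1 : ‖h (min t (x (n+N+1) (2*i+2))) (min t (x (n+N+1) (2*i+1)))
                (min t (x (n+N+1) (2*i)))‖ ≤ CS * (T/2^(n+N+1)) ^ μ := by
              apply hHB N₀ hdec C ρ hC hρ hsum hb _ _ _ (hxmem t ht _ _) (hxmem t ht _ _)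
                (hxmem t ht _ _) (T/2^(n+N+1)) hspn1.le
              · exact habsgap t (2*i+1)
              · exact habsgap t (2*i)
            have hb2 : ‖h (min s (x (n+N+1) (2*i+2))) (min s (x (n+N+1) (2*i+1)))
                (min s (x (n+N+1) (2*i)))‖ ≤ CS * (T/2^(n+N+1)) ^ μ := by
              apply hHB N₀ hdec C ρ hC hρ hsum hb _ _ _ (hxmem s hs _ _) (hxmem s hs _ _)
                (hxmem s hs _ _) (T/2^(n+N+1)) hspn1.le
              · exact habsgap s (2*i+1)
              · exact habsgap s (2*i)
            linarith
          · -- vanishing off the active window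
            intro i hcond
            beta_reduce
            have hxi : (i:ℝ) * (T/2^(n+N)) = x (n+N+1) (2*i) := by
              rw [hxdouble (n+N) i, hxeq]
            have hxi1 : ((i:ℝ)+1) * (T/2^(n+N)) = x (n+N+1) (2*i+2) := by
              rw [show 2*i+2 = 2*(i+1) from by ring, hxdouble (n+N) (i+1), hxeq]
              push_cast; ring
            rcases hcond with hcase | hcase
            · rw [hxi] at hcase
              have hm0 : ∀ j, 2*i ≤ j → max t s ≤ x (n+N+1) j :=
                fun j hj => hcase.trans (hxmono (n+N+1) (2*i) j hj)
              have ht0 : min t (x (n+N+1) (2*i)) = t :=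
                min_eq_left ((le_max_left t s).trans (hm0 (2*i) le_rfl))
              have ht1 : min t (x (n+N+1) (2*i+1)) = t :=
                min_eq_left ((le_max_left t s).trans (hm0 (2*i+1) (by omega)))
              have ht2 : min t (x (n+N+1) (2*i+2)) = t :=
                min_eq_left ((le_max_left t s).trans (hm0 (2*i+2) (by omega)))
              have hs0 : min s (x (n+N+1) (2*i)) = s :=
                min_eq_left ((le_max_right t s).trans (hm0 (2*i) le_rfl))
              have hs1 : min s (x (n+N+1) (2*i+1)) = s :=
                min_eq_left ((le_max_right t s).trans (hm0 (2*i+1) (by omega)))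
              have hs2 : min s (x (n+N+1) (2*i+2)) = s :=
                min_eq_left ((le_max_right t s).trans (hm0 (2*i+2) (by omega)))
              rw [ht0, ht1, ht2, hs0, hs1, hs2, hvanish t t t ht ht ht (Or.inl rfl),
                hvanish s s s hs hs hs (Or.inl rfl), sub_zero]
            · rw [hxi1] at hcase
              have hm0 : ∀ j, j ≤ 2*i+2 → x (n+N+1) j ≤ min t s :=
                fun j hj => (hxmono (n+N+1) j (2*i+2) hj).trans hcase
              have hmt : ∀ j, j ≤ 2*i+2 → min t (x (n+N+1) j) = x (n+N+1) j :=
                fun j hj => min_eq_right ((hm0 j hj).trans (min_le_left t s))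
              have hms : ∀ j, j ≤ 2*i+2 → min s (x (n+N+1) j) = x (n+N+1) j :=
                fun j hj => min_eq_right ((hm0 j hj).trans (min_le_right t s))
              rw [hmt (2*i) (by omega), hmt (2*i+1) (by omega), hmt (2*i+2) le_rfl,
                hms (2*i) (by omega), hms (2*i+1) (by omega), hms (2*i+2) le_rfl, sub_self]
        have hgeo : HasSum (fun n : ℕ => (6*CS*|t - s|^μ) * (θf μ)^n)
            ((6*CS*|t - s|^μ) * (1 - θf μ)⁻¹) :=
          (hasSum_geometric_of_lt_one hθμ0.le hθμ1).mul_left _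
        refine (tsum_of_norm_bounded hgeo hterm).trans (le_of_eq (by ring))
      -- combine
      have hsplit : r t s = (B t s - (f N t - f N s)) - ((F t - F s) - (f N t - f N s)) := by
        rw [hreq]; abel
      have hh2 : (T/2^N) ^ μ ≤ 2^μ * |t - s|^μ := by
        rw [← Real.mul_rpow (by norm_num : (0:ℝ) ≤ 2) (abs_nonneg (t - s))]
        exact Real.rpow_le_rpow hsp0.le hN2 hmupos
      have hfinal1 : 3 * (2 * (CS * (T/2^N) ^ μ)) ≤ 6 * CS * 2^μ * |t - s|^μ := by
        have := mul_le_mul_of_nonneg_left hh2 hCS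
        nlinarith
      calc ‖r t s‖ = ‖(B t s - (f N t - f N s)) - ((F t - F s) - (f N t - f N s))‖ := by
            rw [← hsplit]
        _ ≤ ‖B t s - (f N t - f N s)‖ + ‖(F t - F s) - (f N t - f N s)‖ := norm_sub_le _ _
        _ ≤ 3 * (2 * (CS * (T/2^N) ^ μ)) + 6*CS*|t - s|^μ * (1 - θf μ)⁻¹ :=
            add_le_add hhead htail
        _ ≤ 6 * CS * 2^μ * |t - s|^μ + 6*CS*|t - s|^μ * (1 - θf μ)⁻¹ := by linarith
        _ = K * |t - s| ^ μ := by rw [hKdef]; ring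
  -- the dyadic partition identity for any ψ with δψ = h
  set Q : ℝ → ℝ → ℕ → ℕ → ℝ := stmt5Q with hQdef
  have hQeq : ∀ t s n i, Q t s n i = s + (i:ℝ)/2^n * (t - s) := fun t s n i => rfl
  have hQmem : ∀ t s : ℝ, t ∈ Icc (0:ℝ) T → s ∈ Icc (0:ℝ) T →
      ∀ n i, i ≤ 2^n → Q t s n i ∈ Icc (0:ℝ) T := by
    intro t s ht hs n i hi
    rw [hQeq]
    have h2n : (0:ℝ) < 2^n := by positivity
    have hlam0 : (0:ℝ) ≤ (i:ℝ)/2^n := by positivity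
    have hlam1 : (i:ℝ)/2^n ≤ 1 := by
      rw [div_le_one h2n]
      exact_mod_cast hi
    obtain ⟨hs0, hsT⟩ := hs
    obtain ⟨ht0, htT⟩ := ht
    exact ⟨by nlinarith, by nlinarith⟩
  have hQgap : ∀ (t s : ℝ) (n i : ℕ), Q t s n (i+1) - Q t s n i = (t - s)/2^n := by
    intro t s n i
    rw [hQeq, hQeq]
    push_cast
    ring
  have hQdouble : ∀ (t s : ℝ) (n i : ℕ), Q t s (n+1) (2*i) = Q t s n i := by
    intro t s n i
    rw [hQeq, hQeq]
    have hne : (2:ℝ)^n ≠ 0 := by positivity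
    rw [pow_succ]
    push_cast
    field_simp
  have hQmid : ∀ (t s : ℝ) (n i : ℕ),
      Q t s n (i+1) - Q t s (n+1) (2*i+1) = (t-s)/2^(n+1)
      ∧ Q t s (n+1) (2*i+1) - Q t s n i = (t-s)/2^(n+1) := by
    intro t s n i
    have hne : (2:ℝ)^n ≠ 0 := by positivity
    constructor
    · rw [hQeq t s n (i+1), hQeq t s (n+1) (2*i+1), pow_succ]
      push_cast
      field_simp
      ring
    · rw [hQeq t s (n+1) (2*i+1), hQeq t s n i, pow_succ]
      push_cast
      field_simp
      ring
  have hpart : ∀ (ψ : ℝ → ℝ → V),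
      (∀ a b c, a ∈ Icc (0:ℝ) T → b ∈ Icc (0:ℝ) T → c ∈ Icc (0:ℝ) T →
        h a b c = ψ a c - ψ a b - ψ b c) →
      ∀ t s : ℝ, t ∈ Icc (0:ℝ) T → s ∈ Icc (0:ℝ) T → ∀ n : ℕ,
      ψ t s = (∑ i ∈ Finset.range (2^n), ψ (Q t s n (i+1)) (Q t s n i))
        + ∑ m ∈ Finset.range n, (∑ i ∈ Finset.range (2^m),
            h (Q t s m (i+1)) (Q t s (m+1) (2*i+1)) (Q t s m i)) := by
    intro ψ hδψ t s ht hs n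
    induction n with
    | zero =>
        have h0 : Q t s 0 0 = s := by rw [hQeq]; norm_num
        have h1 : Q t s 0 1 = t := by rw [hQeq]; norm_num
        simp only [pow_zero, Finset.range_one, Finset.sum_singleton, Finset.range_zero,
          Finset.sum_empty, add_zero, h0, h1]
    | succ n ih =>
        have h2pow : (2:ℕ)^(n+1) = 2^n * 2 := pow_succ 2 n
        have hstep : ∑ i ∈ Finset.range (2^n), ψ (Q t s n (i+1)) (Q t s n i)
            = (∑ i ∈ Finset.range (2^(n+1)), ψ (Q t s (n+1) (i+1)) (Q t s (n+1) i))
              + ∑ i ∈ Finset.range (2^n),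
                  h (Q t s n (i+1)) (Q t s (n+1) (2*i+1)) (Q t s n i) := by
          have hre : ∑ i ∈ Finset.range (2^(n+1)), ψ (Q t s (n+1) (i+1)) (Q t s (n+1) i)
              = ∑ i ∈ Finset.range (2^n),
                  (ψ (Q t s (n+1) (2*i+1)) (Q t s (n+1) (2*i))
                    + ψ (Q t s (n+1) (2*i+1+1)) (Q t s (n+1) (2*i+1))) := by
            rw [h2pow, mul_comm ((2:ℕ)^n) 2, stmt5_sum_two_mul]
          rw [hre, ← Finset.sum_add_distrib]
          apply Finset.sum_congr rfl
          intro i hi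
          have hi' : i < 2^n := Finset.mem_range.mp hi
          have hmem1 : Q t s n (i+1) ∈ Icc (0:ℝ) T := hQmem t s ht hs n (i+1) (by omega)
          have hmem2 : Q t s (n+1) (2*i+1) ∈ Icc (0:ℝ) T :=
            hQmem t s ht hs (n+1) (2*i+1) (by omega)
          have hmem3 : Q t s n i ∈ Icc (0:ℝ) T := hQmem t s ht hs n i (by omega)
          have hd := hδψ (Q t s n (i+1)) (Q t s (n+1) (2*i+1)) (Q t s n i) hmem1 hmem2 hmem3
          have e0 : Q t s (n+1) (2*i) = Q t s n i := hQdouble t s n i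
          have e1 : Q t s (n+1) (2*i+1+1) = Q t s n (i+1) := by
            rw [show 2*i+1+1 = 2*(i+1) from by ring, hQdouble]
          rw [e0, e1, hd]
          abel
        rw [ih, hstep, Finset.sum_range_succ]
        abel
  -- a generic bound on the dyadic Riemann sums of a Hölder function
  have hRgen : ∀ (ψ : ℝ → ℝ → V) (Kp νp : ℝ), 0 ≤ νp →
      (∀ a b : ℝ, a ∈ Icc (0:ℝ) T → b ∈ Icc (0:ℝ) T → ‖ψ a b‖ ≤ Kp * |a - b| ^ νp) →
      ∀ t s : ℝ, t ∈ Icc (0:ℝ) T → s ∈ Icc (0:ℝ) T → ∀ n : ℕ,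
      ‖∑ i ∈ Finset.range (2^n), ψ (Q t s n (i+1)) (Q t s n i)‖
        ≤ Kp * |t - s| ^ νp * (θf νp)^n := by
    intro ψ Kp νp hνp hψ t s ht hs n
    have hd0 : (0:ℝ) ≤ |t - s| := abs_nonneg _
    have habs : ∀ i : ℕ, |Q t s n (i+1) - Q t s n i| = |t - s| / 2^n := by
      intro i
      rw [hQgap, abs_div]
      congr 1
      exact abs_of_nonneg (by positivity)
    have hterm : ∀ i ∈ Finset.range (2^n),
        ‖ψ (Q t s n (i+1)) (Q t s n i)‖ ≤ Kp * (|t - s| / 2^n) ^ νp := by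
      intro i hi
      have hi' : i < 2^n := Finset.mem_range.mp hi
      have h1 := hψ (Q t s n (i+1)) (Q t s n i)
        (hQmem t s ht hs n (i+1) (by omega)) (hQmem t s ht hs n i (by omega))
      rwa [habs i] at h1
    calc ‖∑ i ∈ Finset.range (2^n), ψ (Q t s n (i+1)) (Q t s n i)‖
        ≤ ∑ i ∈ Finset.range (2^n), ‖ψ (Q t s n (i+1)) (Q t s n i)‖ := norm_sum_le _ _
      _ ≤ (Finset.range (2^n)).card • (Kp * (|t - s| / 2^n) ^ νp) :=
          Finset.sum_le_card_nsmul _ _ _ hterm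
      _ = (2^n : ℝ) * (Kp * (|t - s| / 2^n) ^ νp) := by
          rw [Finset.card_range, nsmul_eq_mul]; push_cast; ring
      _ = Kp * ((2:ℝ)^n * (|t - s| / 2^n) ^ νp) := by ring
      _ = Kp * (|t - s| ^ νp * (θf νp)^n) := by rw [hshape νp _ hd0 n]
      _ = Kp * |t - s| ^ νp * (θf νp)^n := by ring
  refine ⟨r, ⟨?_, fun t ht => hrdiag t ht⟩, hδr, ⟨μ, hμ, K, hmain⟩, ?_, ?_⟩
  · -- continuity
    have hBc : ContinuousOn (fun p : ℝ × ℝ => B p.1 p.2) (Icc (0:ℝ) T ×ˢ Icc (0:ℝ) T) := by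
      have hmap : MapsTo (fun p : ℝ × ℝ => ((0:ℝ), p.1, p.2)) (Icc (0:ℝ) T ×ˢ Icc (0:ℝ) T)
          (Icc (0:ℝ) T ×ˢ Icc (0:ℝ) T ×ˢ Icc (0:ℝ) T) :=
        fun p hp => ⟨h0T, hp⟩
      have hcmp : ContinuousOn (fun p : ℝ × ℝ => h 0 p.1 p.2) (Icc (0:ℝ) T ×ˢ Icc (0:ℝ) T) :=
        hcont.comp ((continuous_const.prodMk
          (continuous_fst.prodMk continuous_snd)).continuousOn) hmap
      have heqB : (fun p : ℝ × ℝ => B p.1 p.2) = fun p : ℝ × ℝ => -h 0 p.1 p.2 :=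
        funext fun p => hBeq p.1 p.2
      rw [heqB]
      exact hcmp.neg
    have hfc : ∀ n, ContinuousOn (f n) (Icc (0:ℝ) T) := by
      intro n
      have hterm : ∀ i : ℕ,
          ContinuousOn (fun u : ℝ => B (min u (x n (i+1))) (min u (x n i))) (Icc (0:ℝ) T) := by
        intro i
        have hg : Continuous (fun u : ℝ => (min u (x n (i+1)), min u (x n i))) :=
          (continuous_id.min continuous_const).prodMk (continuous_id.min continuous_const)
        have hmapg : MapsTo (fun u : ℝ => (min u (x n (i+1)), min u (x n i)))
            (Icc (0:ℝ) T) (Icc (0:ℝ) T ×ˢ Icc (0:ℝ) T) :=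
          fun u hu => ⟨hxmem u hu n (i+1), hxmem u hu n i⟩
        exact hBc.comp hg.continuousOn hmapg
      have heqf : f n = fun u => ∑ i ∈ Finset.range (2^n),
          B (min u (x n (i+1))) (min u (x n i)) :=
        funext fun u => hfeq n u
      rw [heqf]
      exact continuousOn_finset_sum _ (fun i _ => hterm i)
    have hFc : ContinuousOn F (Icc (0:ℝ) T) := by
      have h1 : ContinuousOn (fun u : ℝ => ∑' n : ℕ, (f (n+1) u - f n u)) (Icc (0:ℝ) T) := by
        refine continuousOn_tsum (fun i => (hfc (i+1)).sub (hfc i))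
          ((summable_geometric_of_lt_one (hθpos μ).le (hθlt μ hμ)).mul_left
            (CS * (T/2)^μ)) ?_
        intro n u hu
        exact hfd_bound n u hu
      have heqF : F = fun u => f 0 u + ∑' n : ℕ, (f (n+1) u - f n u) := funext hFeq
      rw [heqF]
      exact (hfc 0).add h1
    have heqr : (fun p : ℝ × ℝ => r p.1 p.2)
        = fun p : ℝ × ℝ => B p.1 p.2 - F p.1 + F p.2 :=
      funext fun p => hreq p.1 p.2
    rw [heqr]
    exact (hBc.sub (hFc.comp continuous_fst.continuousOn fun p hp => hp.1)).add
      (hFc.comp continuous_snd.continuousOn fun p hp => hp.2)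
  · -- sharp bound for arbitrary decompositions
    intro M' hd' C' ρ' hC' hρ' hsum' hb' t s ht hs
    have hd0 : (0:ℝ) ≤ |t - s| := abs_nonneg _
    have hCS' : (0:ℝ) ≤ ∑ k, C' k := Finset.sum_nonneg fun k _ => hC' k
    have hθμ1 := hθlt μ hμ
    have hθμ0 := hθpos μ
    have h1θ : 0 < 1 - θf μ := by linarith
    have h2μpos : (0:ℝ) < (2:ℝ)^μ := Real.rpow_pos_of_pos (by norm_num) μ
    have hk2 : (2:ℝ)^μ * (1 - θf μ) = (2:ℝ)^μ - 2 := by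
      have hone : (2:ℝ)^μ * ((2:ℝ)⁻¹)^μ = 1 := by
        rw [← Real.mul_rpow (by norm_num) (by norm_num)]
        norm_num
      calc (2:ℝ)^μ * (1 - θf μ) = (2:ℝ)^μ - 2 * ((2:ℝ)^μ * ((2:ℝ)⁻¹)^μ) := by
            rw [hθeq]; ring
        _ = (2:ℝ)^μ - 2 := by rw [hone]; ring
    have hinv : ((2:ℝ)^μ)⁻¹ * (1 - θf μ)⁻¹ = ((2:ℝ)^μ - 2)⁻¹ := by
      rw [← mul_inv, hk2]
    have hRn := hRgen r K μ (by linarith) hmain t s ht hs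
    have hSn : ∀ n : ℕ, ‖∑ m ∈ Finset.range n, ∑ i ∈ Finset.range (2^m),
        h (Q t s m (i+1)) (Q t s (m+1) (2*i+1)) (Q t s m i)‖
        ≤ ((2:ℝ)^μ - 2)⁻¹ * (∑ k, C' k) * |t - s| ^ μ := by
      intro n
      have hDm : ∀ m : ℕ, ‖∑ i ∈ Finset.range (2^m),
          h (Q t s m (i+1)) (Q t s (m+1) (2*i+1)) (Q t s m i)‖
          ≤ (∑ k, C' k) * (|t - s|/2)^μ * (θf μ)^m := by
        intro m
        have hterm : ∀ i ∈ Finset.range (2^m),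
            ‖h (Q t s m (i+1)) (Q t s (m+1) (2*i+1)) (Q t s m i)‖
              ≤ (∑ k, C' k) * (|t - s| / 2^(m+1)) ^ μ := by
          intro i hi
          have hi' : i < 2^m := Finset.mem_range.mp hi
          have h2pow : (2:ℕ)^(m+1) = 2^m * 2 := pow_succ 2 m
          have habs : ∀ z : ℝ, z = (t-s)/2^(m+1) → |z| ≤ |t - s| / 2^(m+1) := by
            intro z hz
            rw [hz, abs_div, abs_of_nonneg (show (0:ℝ) ≤ (2:ℝ)^(m+1) by positivity)]
          apply hHB M' hd' C' ρ' hC' hρ' hsum' hb' _ _ _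
            (hQmem t s ht hs m (i+1) (by omega))
            (hQmem t s ht hs (m+1) (2*i+1) (by omega))
            (hQmem t s ht hs m i (by omega))
            (|t - s|/2^(m+1)) (by positivity)
            (habs _ (hQmid t s m i).1) (habs _ (hQmid t s m i).2)
        calc ‖∑ i ∈ Finset.range (2^m),
            h (Q t s m (i+1)) (Q t s (m+1) (2*i+1)) (Q t s m i)‖
            ≤ ∑ i ∈ Finset.range (2^m),
              ‖h (Q t s m (i+1)) (Q t s (m+1) (2*i+1)) (Q t s m i)‖ := norm_sum_le _ _
          _ ≤ (Finset.range (2^m)).card • ((∑ k, C' k) * (|t - s| / 2^(m+1)) ^ μ) :=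
              Finset.sum_le_card_nsmul _ _ _ hterm
          _ = (2^m : ℝ) * ((∑ k, C' k) * (|t - s| / 2^(m+1)) ^ μ) := by
              rw [Finset.card_range, nsmul_eq_mul]; push_cast; ring
          _ = (∑ k, C' k) * ((2:ℝ)^m * ((|t - s|/2) / 2^m) ^ μ) := by
              rw [show |t - s| / 2^(m+1) = (|t - s|/2)/2^m from by rw [pow_succ]; ring]
              ring
          _ = (∑ k, C' k) * (|t - s|/2)^μ * (θf μ)^m := by
              rw [hshape μ _ (by positivity) m]; ring
      have hgs : ∑ m ∈ Finset.range n, (θf μ)^m ≤ (1 - θf μ)⁻¹ := by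
        have hθn0 : (0:ℝ) ≤ (θf μ)^n := pow_nonneg hθμ0.le n
        rw [geom_sum_eq (ne_of_lt hθμ1) n]
        have heq : ((θf μ)^n - 1)/(θf μ - 1) = (1 - (θf μ)^n) * (1 - θf μ)⁻¹ := by
          rw [show θf μ - 1 = -(1 - θf μ) from by ring,
            show (θf μ)^n - 1 = -(1 - (θf μ)^n) from by ring, div_eq_mul_inv, inv_neg,
            neg_mul_neg]
        rw [heq]
        have : 1 - (θf μ)^n ≤ 1 := by linarith
        calc (1 - (θf μ)^n) * (1 - θf μ)⁻¹ ≤ 1 * (1 - θf μ)⁻¹ :=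
              mul_le_mul_of_nonneg_right this (by positivity)
          _ = (1 - θf μ)⁻¹ := one_mul _
      calc ‖∑ m ∈ Finset.range n, ∑ i ∈ Finset.range (2^m),
            h (Q t s m (i+1)) (Q t s (m+1) (2*i+1)) (Q t s m i)‖
          ≤ ∑ m ∈ Finset.range n, ‖∑ i ∈ Finset.range (2^m),
            h (Q t s m (i+1)) (Q t s (m+1) (2*i+1)) (Q t s m i)‖ := norm_sum_le _ _
        _ ≤ ∑ m ∈ Finset.range n, ((∑ k, C' k) * (|t - s|/2)^μ * (θf μ)^m) :=
            Finset.sum_le_sum (fun m _ => hDm m)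
        _ = (∑ k, C' k) * (|t - s|/2)^μ * ∑ m ∈ Finset.range n, (θf μ)^m := by
            rw [Finset.mul_sum]
        _ ≤ (∑ k, C' k) * (|t - s|/2)^μ * (1 - θf μ)⁻¹ := by
            apply mul_le_mul_of_nonneg_left hgs
            have : (0:ℝ) ≤ (|t - s|/2)^μ := Real.rpow_nonneg (by positivity) μ
            positivity
        _ = ((2:ℝ)^μ - 2)⁻¹ * (∑ k, C' k) * |t - s| ^ μ := by
            rw [Real.div_rpow hd0 (by norm_num : (0:ℝ) ≤ 2), div_eq_mul_inv, ← hinv]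
            ring
    have hbound : ∀ n : ℕ, ‖r t s‖
        ≤ K * |t - s|^μ * (θf μ)^n + ((2:ℝ)^μ - 2)⁻¹ * (∑ k, C' k) * |t - s| ^ μ := by
      intro n
      rw [hpart r hδr t s ht hs n]
      exact (norm_add_le _ _).trans (add_le_add (hRn n) (hSn n))
    have hlim : Tendsto (fun n : ℕ => K * |t - s|^μ * (θf μ)^n
        + ((2:ℝ)^μ - 2)⁻¹ * (∑ k, C' k) * |t - s| ^ μ) atTop
        (𝓝 (K * |t - s|^μ * 0 + ((2:ℝ)^μ - 2)⁻¹ * (∑ k, C' k) * |t - s| ^ μ)) := by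
      apply Tendsto.add_const
      exact (tendsto_pow_atTop_nhds_zero_of_lt_one hθμ0.le hθμ1).const_mul _
    have := ge_of_tendsto' hlim hbound
    rw [mul_zero, zero_add] at this
    exact this
  · -- uniqueness
    intro r' hr'c hδ' hr'ν t s ht hs
    obtain ⟨ν, hν, K', hK'⟩ := hr'ν
    have hθν0 := hθpos ν
    have hθν1 := hθlt ν hν
    have hθμ0 := hθpos μ
    have hθμ1 := hθlt μ hμ
    have hdiff : ∀ n : ℕ, r' t s - r t s
        = (∑ i ∈ Finset.range (2^n), r' (Q t s n (i+1)) (Q t s n i))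
          - ∑ i ∈ Finset.range (2^n), r (Q t s n (i+1)) (Q t s n i) := by
      intro n
      rw [hpart r hδr t s ht hs n, hpart r' hδ' t s ht hs n]
      abel
    have hbnd : ∀ n : ℕ, ‖r' t s - r t s‖
        ≤ K' * |t - s|^ν * (θf ν)^n + K * |t - s|^μ * (θf μ)^n := by
      intro n
      rw [hdiff n]
      refine (norm_sub_le _ _).trans (add_le_add ?_ ?_)
      · exact hRgen r' K' ν (by linarith) (fun a b ha hb => hK' a b ha hb) t s ht hs n
      · exact hRgen r K μ (by linarith) hmain t s ht hs n
    have hlim : Tendsto (fun n : ℕ => K' * |t - s|^ν * (θf ν)^n + K * |t - s|^μ * (θf μ)^n)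
        atTop (𝓝 (K' * |t - s|^ν * 0 + K * |t - s|^μ * 0)) :=
      ((tendsto_pow_atTop_nhds_zero_of_lt_one hθν0.le hθν1).const_mul _).add
        ((tendsto_pow_atTop_nhds_zero_of_lt_one hθμ0.le hθμ1).const_mul _)
    have hle := ge_of_tendsto' hlim hbnd
    rw [mul_zero, mul_zero, add_zero] at hle
    have : r' t s - r t s = 0 := norm_le_zero_iff.mp hle
    exact sub_eq_zero.mp this
end

section
/- Let V be a Banach space, T > 0, and let g ∈ 𝒞₂(V) be such that ‖δg‖_μ < ∞ for some μ > 1. Let f ∈ 𝒞₁(V) and r ∈ 𝒞₂(V) with ‖r‖_μ < ∞ be such that g = δf + r. Then for all 0 ≤ s < t ≤ T the Riemann sums Σ_{i=0}^{n−1} g(u_{i+1}, u_i) over partitions s = u₀ < u₁ < ⋯ < u_n = t converge to f(t) − f(s) as the mesh max_i (u_{i+1}−u_i) tends to 0; i.e. δf is the indefinite integral of the 1-increment g. -/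
open Set

private lemma stmt7_mono (n : ℕ) (u : ℕ → ℝ) (h : ∀ i < n, u i < u (i + 1)) :
    ∀ i j, i ≤ j → j ≤ n → u i ≤ u j := by
  intro i j hij hjn
  induction j with
  | zero => simp_all
  | succ k ih =>
    rcases Nat.eq_or_lt_of_le hij with rfl | h'
    · exact le_rfl
    · exact le_trans (ih (Nat.lt_succ_iff.mp h') (Nat.le_of_succ_le hjn))
        (le_of_lt (h k hjn))

/-- **Integration of small 1-increments.**
Let `V` be a Banach space, `T > 0`, and `g ∈ 𝒞₂(V)` with `‖δg‖_μ < ∞` for some `μ > 1`.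
If `f ∈ 𝒞₁(V)` and `r ∈ 𝒞₂(V)` with `‖r‖_μ < ∞` are such that `g = δf + r`, then for all
`0 ≤ s < t ≤ T` the Riemann sums `Σ g(u_{i+1}, u_i)` over partitions of `[s,t]` converge
to `f(t) - f(s)` as the mesh tends to `0`. -/
theorem stmt7
    {V : Type*} [NormedAddCommGroup V] [NormedSpace ℝ V]
    (T : ℝ) (hT : 0 < T) (μ : ℝ) (hμ : 1 < μ)
    (g : ℝ → ℝ → V)
    (hgc : ContinuousOn (fun p : ℝ × ℝ => g p.1 p.2) (Icc 0 T ×ˢ Icc 0 T))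
    (hg0 : ∀ t ∈ Icc 0 T, g t t = 0)
    -- `‖δg‖_μ < ∞`
    (hfin : ∃ (N : ℕ) (hdec : Fin N → ℝ → ℝ → ℝ → V) (C ρ : Fin N → ℝ),
      (∀ k, 0 ≤ C k) ∧ (∀ k, ρ k ∈ Set.Ioo (0:ℝ) μ) ∧
      (∀ t u s, t ∈ Icc 0 T → u ∈ Icc 0 T → s ∈ Icc 0 T →
        g t s - g t u - g u s = ∑ k, hdec k t u s) ∧
      (∀ k, ∀ t u s, t ∈ Icc 0 T → u ∈ Icc 0 T → s ∈ Icc 0 T →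
        ‖hdec k t u s‖ ≤ C k * |t - u| ^ (ρ k) * |u - s| ^ (μ - ρ k)))
    (f : ℝ → V) (hf : ContinuousOn f (Icc 0 T))
    (r : ℝ → ℝ → V)
    (hrc : ContinuousOn (fun p : ℝ × ℝ => r p.1 p.2) (Icc 0 T ×ˢ Icc 0 T))
    (hr0 : ∀ t ∈ Icc 0 T, r t t = 0)
    (hrμ : ∃ K : ℝ, ∀ t s, t ∈ Icc 0 T → s ∈ Icc 0 T → ‖r t s‖ ≤ K * |t - s| ^ μ)
    (hdecomp : ∀ t s, t ∈ Icc 0 T → s ∈ Icc 0 T → g t s = (f t - f s) + r t s) :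
    ∀ s t : ℝ, 0 ≤ s → s < t → t ≤ T →
      ∀ ε > (0:ℝ), ∃ η > (0:ℝ), ∀ (n : ℕ) (u : ℕ → ℝ),
        u 0 = s → u n = t → (∀ i < n, u i < u (i + 1)) →
        (∀ i < n, u (i + 1) - u i ≤ η) →
        ‖(∑ i ∈ Finset.range n, g (u (i + 1)) (u i)) - (f t - f s)‖ ≤ ε := by

  obtain ⟨K, hK⟩ := hrμ
  intro s t hs hst hT' ε hε
  set K' := max K 0 with hK'def
  have hK'0 : 0 ≤ K' := le_max_right _ _
  have hKK' : K ≤ K' := le_max_left _ _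
  have hts : 0 < t - s := sub_pos.mpr hst
  set A : ℝ := ε / ((K' + 1) * (t - s)) with hAdef
  have hApos : 0 < A := div_pos hε (by positivity)
  have hμ1 : (0:ℝ) < μ - 1 := by linarith
  refine ⟨A ^ (1 / (μ - 1)), Real.rpow_pos_of_pos hApos _, ?_⟩
  intro n u hu0 hun hmono hmesh
  have hum := stmt7_mono n u hmono
  have hmem : ∀ i ≤ n, u i ∈ Icc (0:ℝ) T := by
    intro i hi
    constructor
    · calc (0:ℝ) ≤ s := hs
        _ = u 0 := hu0.symm
        _ ≤ u i := hum 0 i (Nat.zero_le _) hi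
    · calc u i ≤ u n := hum i n hi le_rfl
        _ = t := hun
        _ ≤ T := hT'
  have key : (∑ i ∈ Finset.range n, g (u (i + 1)) (u i)) - (f t - f s)
      = ∑ i ∈ Finset.range n, r (u (i + 1)) (u i) := by
    have heq : ∀ i ∈ Finset.range n,
        g (u (i + 1)) (u i) = (f (u (i + 1)) - f (u i)) + r (u (i + 1)) (u i) := by
      intro i hi
      have hi' := Finset.mem_range.mp hi
      exact hdecomp _ _ (hmem _ hi') (hmem _ (le_of_lt hi'))
    rw [Finset.sum_congr rfl heq, Finset.sum_add_distrib,
      Finset.sum_range_sub (fun i => f (u i)), hun, hu0]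
    abel
  rw [key]
  have hηpow : (A ^ (1 / (μ - 1))) ^ (μ - 1) = A := by
    rw [← Real.rpow_mul (le_of_lt hApos), one_div_mul_cancel (ne_of_gt hμ1), Real.rpow_one]
  have hterm : ∀ i ∈ Finset.range n,
      ‖r (u (i + 1)) (u i)‖ ≤ K' * A * (u (i + 1) - u i) := by
    intro i hi
    have hi' := Finset.mem_range.mp hi
    have hd : 0 < u (i + 1) - u i := sub_pos.mpr (hmono i hi')
    have h1 : ‖r (u (i + 1)) (u i)‖ ≤ K * (u (i + 1) - u i) ^ μ := by
      have := hK _ _ (hmem _ hi') (hmem _ (le_of_lt hi'))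
      rwa [abs_of_pos hd] at this
    have h2 : K * (u (i + 1) - u i) ^ μ ≤ K' * (u (i + 1) - u i) ^ μ := by
      have : (0:ℝ) ≤ (u (i + 1) - u i) ^ μ := Real.rpow_nonneg (le_of_lt hd) _
      exact mul_le_mul_of_nonneg_right hKK' this
    have h3 : (u (i + 1) - u i) ^ μ ≤ A * (u (i + 1) - u i) := by
      have hsplit : (u (i + 1) - u i) ^ μ
          = (u (i + 1) - u i) ^ (μ - 1) * (u (i + 1) - u i) := by
        nth_rewrite 1 [show μ = (μ - 1) + 1 by ring]
        rw [Real.rpow_add hd, Real.rpow_one]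
      rw [hsplit]
      have hle : (u (i + 1) - u i) ^ (μ - 1) ≤ (A ^ (1 / (μ - 1))) ^ (μ - 1) :=
        Real.rpow_le_rpow (le_of_lt hd) (hmesh i hi') (le_of_lt hμ1)
      rw [hηpow] at hle
      exact mul_le_mul_of_nonneg_right hle (le_of_lt hd)
    calc ‖r (u (i + 1)) (u i)‖ ≤ K' * (u (i + 1) - u i) ^ μ := le_trans h1 h2
      _ ≤ K' * (A * (u (i + 1) - u i)) := mul_le_mul_of_nonneg_left h3 hK'0
      _ = K' * A * (u (i + 1) - u i) := by ring
  calc ‖∑ i ∈ Finset.range n, r (u (i + 1)) (u i)‖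
      ≤ ∑ i ∈ Finset.range n, ‖r (u (i + 1)) (u i)‖ := norm_sum_le _ _
    _ ≤ ∑ i ∈ Finset.range n, K' * A * (u (i + 1) - u i) :=
        Finset.sum_le_sum hterm
    _ = K' * A * (t - s) := by
        rw [← Finset.mul_sum, Finset.sum_range_sub u, hun, hu0]
    _ = ε * (K' / (K' + 1)) := by
        rw [hAdef]; field_simp
    _ ≤ ε * 1 := by
        apply mul_le_mul_of_nonneg_left _ (le_of_lt hε)
        rw [div_le_one (by positivity)]; linarith
    _ = ε := mul_one ε
end
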